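/- arXiv:1605.08742 — 12 statements merged into one kernel-verified Lean document; each statement's English description precedes it below -/
import Mathlib

section
/- Let m ≥ 2, let B ∈ ℤ^{m×m} be invertible with columns B₁,…,B_m, let b ∈ ℤ^m be such that β := B⁻¹b ∈ ℤ^m, let M ∈ ℤ with M ≥ 0, and set C = M + ‖β‖_∞ + 1. Let q₁,…,q_{m−1} be pairwise coprime positive integers with q_i > C for all i. Let t ∈ ℝ^m be a nonzero vector satisfying tᵀ(B_i + (1/q_i)·B_m) = 0 for all i = 1,…,m−1. Then the hyperplane H = {z ∈ ℝ^m : tᵀz = 0} avoids −b + L₂ where L₂ = {By : y ∈ ℤ^m, ‖y‖_∞ ≤ M}; explicitly, for every y ∈ ℤ^m with ‖y‖_∞ ≤ M, if tᵀ(By − b) = 0 then By = b. -/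
/-- Proposition `proj`: with `m = k + 1 ≥ 2`, pairwise coprime integers
`q₁, …, q_{m-1}` all greater than `C = M + ‖β‖_∞ + 1`, and `t ≠ 0` orthogonal to
the vectors `B_i + (1/q_i)·B_m` (for `i = 1, …, m-1`), the hyperplane
`{z | tᵀz = 0}` avoids `-b + L₂`, where `L₂ = {By : y ∈ ℤᵐ, ‖y‖_∞ ≤ M}`. -/
theorem stmt_2 (k : ℕ) (hk : 1 ≤ k)
    (B : Matrix (Fin (k + 1)) (Fin (k + 1)) ℤ) (hB : B.det ≠ 0)
    (b β : Fin (k + 1) → ℤ) (hβ : B.mulVec β = b)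
    (M : ℤ) (hM : 0 ≤ M)
    (q : Fin k → ℤ) (hqpos : ∀ i, 0 < q i)
    (hqcop : ∀ i j, i ≠ j → Int.gcd (q i) (q j) = 1)
    (hqbig : ∀ i j, M + |β j| + 1 < q i)
    (t : Fin (k + 1) → ℝ) (ht : t ≠ 0)
    (htq : ∀ i : Fin k,
      (∑ l, t l * ((B l i.castSucc : ℝ) + (1 / (q i : ℝ)) * (B l (Fin.last k) : ℝ))) = 0) :
    ∀ y : Fin (k + 1) → ℤ, (∀ j, |y j| ≤ M) →
      (∑ l, t l * ((B.mulVec y l - b l : ℤ) : ℝ)) = 0 → B.mulVec y = b := by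
  intro y hy hsum
  have hqR : ∀ i : Fin k, (q i : ℝ) ≠ 0 := fun i => by
    exact_mod_cast (hqpos i).ne'
  set s : Fin (k + 1) → ℝ := fun j => ∑ l, t l * (B l j : ℝ) with hs
  have hs_eq : ∀ i : Fin k, s i.castSucc = -(s (Fin.last k) / q i) := by
    intro i
    have h1 : s i.castSucc + (1 / (q i : ℝ)) * s (Fin.last k)
        = ∑ l, t l * ((B l i.castSucc : ℝ) + (1 / (q i : ℝ)) * (B l (Fin.last k) : ℝ)) := by
      simp only [hs, Finset.mul_sum, ← Finset.sum_add_distrib]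
      exact Finset.sum_congr rfl fun l _ => by ring
    have h2 := htq i
    rw [← h1] at h2
    field_simp at h2
    linarith
  have hslast : s (Fin.last k) ≠ 0 := by
    intro h0
    have hszero : s = 0 := by
      funext j
      refine Fin.lastCases h0 (fun i => ?_) j
      rw [hs_eq i, h0]; simp
    set B' : Matrix (Fin (k + 1)) (Fin (k + 1)) ℝ := B.map (Int.cast) with hB'
    have hdet : B'.det ≠ 0 := by
      have h : B'.det = (B.det : ℝ) := by
        rw [hB']
        exact (RingHom.map_det (Int.castRingHom ℝ) B).symm
      rw [h]
      exact_mod_cast hB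
    have hvm : Matrix.vecMul t B' = s := by
      funext j
      simp [Matrix.vecMul, dotProduct, hs, hB', Matrix.map_apply]
    have hunit : IsUnit B'.det := isUnit_iff_ne_zero.mpr hdet
    have h3 : Matrix.vecMul (Matrix.vecMul t B') B'⁻¹ = Matrix.vecMul t (B' * B'⁻¹) := by
      rw [Matrix.vecMul_vecMul]
    rw [Matrix.mul_nonsing_inv B' hunit, hvm, hszero] at h3
    exact ht (by simpa using h3.symm)
  set d : Fin (k + 1) → ℤ := fun j => y j - β j with hd
  have hb : ∀ l, ((B.mulVec y l - b l : ℤ) : ℝ) = ∑ j, (B l j : ℝ) * (d j : ℝ) := by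
    intro l
    have h : B.mulVec y l - b l = ∑ j, B l j * d j := by
      rw [← hβ]
      simp [Matrix.mulVec, dotProduct, hd, mul_sub, Finset.sum_sub_distrib]
    rw [h]
    push_cast
    rfl
  have key : ∑ j, s j * (d j : ℝ) = 0 := by
    calc ∑ j, s j * (d j : ℝ)
        = ∑ j, ∑ l, t l * (B l j : ℝ) * (d j : ℝ) := by
          exact Finset.sum_congr rfl fun j _ => by rw [hs, Finset.sum_mul]
      _ = ∑ l, ∑ j, t l * (B l j : ℝ) * (d j : ℝ) := Finset.sum_comm
      _ = ∑ l, t l * ((B.mulVec y l - b l : ℤ) : ℝ) := by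
          refine Finset.sum_congr rfl fun l _ => ?_
          rw [hb l, Finset.mul_sum]
          exact Finset.sum_congr rfl fun j _ => by ring
      _ = 0 := hsum
  rw [Fin.sum_univ_castSucc] at key
  have key2 : s (Fin.last k) *
      ((d (Fin.last k) : ℝ) - ∑ i : Fin k, (d i.castSucc : ℝ) / q i) = 0 := by
    have h : ∑ i : Fin k, s i.castSucc * (d i.castSucc : ℝ)
        = - (s (Fin.last k) * ∑ i : Fin k, (d i.castSucc : ℝ) / q i) := by
      rw [Finset.mul_sum, ← Finset.sum_neg_distrib]
      exact Finset.sum_congr rfl fun i _ => by rw [hs_eq i]; ring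
    rw [h] at key
    linarith [key]
  have hreal : (d (Fin.last k) : ℝ) = ∑ i : Fin k, (d i.castSucc : ℝ) / q i := by
    rcases mul_eq_zero.mp key2 with h | h
    · exact absurd h hslast
    · linarith [h]
  -- integer equation
  have hint : ∑ i : Fin k, d i.castSucc * ∏ j ∈ Finset.univ.erase i, q j
      = d (Fin.last k) * ∏ i, q i := by
    have hcast : ((∑ i : Fin k, d i.castSucc * ∏ j ∈ Finset.univ.erase i, q j : ℤ) : ℝ)
        = ((d (Fin.last k) * ∏ i, q i : ℤ) : ℝ) := by
      push_cast
      rw [hreal, Finset.sum_mul]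
      refine Finset.sum_congr rfl fun i _ => ?_
      have hprod : (q i : ℝ) * ∏ j ∈ Finset.univ.erase i, (q j : ℝ) = ∏ j, (q j : ℝ) :=
        Finset.mul_prod_erase Finset.univ (fun j => (q j : ℝ)) (Finset.mem_univ i)
      rw [← hprod]
      field_simp
      rw [mul_div_cancel_right₀ _ (hqR i)]
    exact_mod_cast hcast
  have hdzero : ∀ i0 : Fin k, d i0.castSucc = 0 := by
    intro i0
    have h1 : q i0 ∣ d (Fin.last k) * ∏ i, q i :=
      Dvd.dvd.mul_left (Finset.dvd_prod_of_mem q (Finset.mem_univ i0)) _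
    have h2 : q i0 ∣ ∑ i ∈ Finset.univ.erase i0,
        d i.castSucc * ∏ j ∈ Finset.univ.erase i, q j := by
      refine Finset.dvd_sum fun i hi => ?_
      have hne : i ≠ i0 := (Finset.mem_erase.mp hi).1
      have hmem : i0 ∈ Finset.univ.erase i :=
        Finset.mem_erase.mpr ⟨hne.symm, Finset.mem_univ i0⟩
      exact Dvd.dvd.mul_left (Finset.dvd_prod_of_mem q hmem) _
    have h3 : d i0.castSucc * ∏ j ∈ Finset.univ.erase i0, q j
        = d (Fin.last k) * ∏ i, q i
          - ∑ i ∈ Finset.univ.erase i0, d i.castSucc * ∏ j ∈ Finset.univ.erase i, q j := by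
      rw [← hint, ← Finset.add_sum_erase Finset.univ _ (Finset.mem_univ i0)]
      ring
    have h4 : q i0 ∣ d i0.castSucc * ∏ j ∈ Finset.univ.erase i0, q j := by
      rw [h3]; exact dvd_sub h1 h2
    have hcop : IsCoprime (q i0) (∏ j ∈ Finset.univ.erase i0, q j) := by
      refine IsCoprime.prod_right fun j hj => ?_
      have hne : i0 ≠ j := ((Finset.mem_erase.mp hj).1).symm
      exact Int.isCoprime_iff_gcd_eq_one.mpr (hqcop i0 j hne)
    have h5 : q i0 ∣ d i0.castSucc := hcop.dvd_of_dvd_mul_right h4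
    have hlt : |d i0.castSucc| < q i0 := by
      have ha : |y i0.castSucc - β i0.castSucc| ≤ |y i0.castSucc| + |β i0.castSucc| :=
        abs_sub _ _
      have hb2 := hy i0.castSucc
      have hc := hqbig i0 i0.castSucc
      simp only [hd]
      omega
    exact Int.eq_zero_of_abs_lt_dvd h5 hlt
  have hdlast : d (Fin.last k) = 0 := by
    have h : (d (Fin.last k) : ℝ) = 0 := by
      rw [hreal]
      refine Finset.sum_eq_zero fun i _ => ?_
      rw [hdzero i]; simp
    exact_mod_cast h
  have hyβ : y = β := by
    funext j
    have : d j = 0 := by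
      refine Fin.lastCases hdlast (fun i => hdzero i) j
    simpa [hd, sub_eq_zero] using this
  rw [hyβ, hβ]
end

section
/- Let A ∈ ℤ^{m×n}, u ∈ ℤ^n with u ≥ 0, and b ∈ ℤ^m with b ∈ L(A) = {Ax : x ∈ ℤ^n}. Then there exists a strong aggregation matrix T ∈ ℚ^{1×m} of size one for the bounded system (F^B), i.e. T with {x ∈ ℤ^n : 0 ≤ x ≤ u, Ax = b} = {x ∈ ℤ^n : 0 ≤ x ≤ u, (TA)x = Tb}. -/
open Matrix

lemma aux_dual (m : ℕ) (S : Finset (Fin m → ℚ)) (hS : ∀ v ∈ S, v ≠ 0) :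
    ∃ t : Fin m → ℚ, ∀ v ∈ S, t ⬝ᵥ v ≠ 0 := by
  classical
  induction S using Finset.induction with
  | empty => exact ⟨0, by simp⟩
  | @insert v S hvS ih =>
    obtain ⟨t, ht⟩ := ih (fun w hw => hS w (Finset.mem_insert_of_mem hw))
    have hv : v ≠ 0 := hS v (Finset.mem_insert_self v S)
    obtain ⟨i0, hi0⟩ := Function.ne_iff.mp hv
    simp only [Pi.zero_apply] at hi0
    set B : Finset ℚ := (insert v S).image (fun w => -(t ⬝ᵥ w) / (w i0)) with hB
    obtain ⟨c, hc⟩ := Infinite.exists_notMem_finset B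
    refine ⟨fun i => t i + c * (if i = i0 then 1 else 0), ?_⟩
    intro w hw
    have hdot : (fun i => t i + c * (if i = i0 then 1 else 0)) ⬝ᵥ w
        = t ⬝ᵥ w + c * w i0 := by
      simp [dotProduct, add_mul, Finset.sum_add_distrib, mul_assoc, ite_mul,
        Finset.mul_sum]
    rw [hdot]
    by_cases hwi : w i0 = 0
    · rcases Finset.mem_insert.mp hw with rfl | hwS
      · exact absurd hwi hi0
      · simp [hwi, ht w hwS]
    · intro hzero
      apply hc
      rw [hB]
      apply Finset.mem_image.mpr
      refine ⟨w, hw, ?_⟩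
      field_simp
      linarith

lemma cast_mulVec (m n : ℕ) (A : Matrix (Fin m) (Fin n) ℤ) (x : Fin n → ℤ) :
    (A.map (Int.cast : ℤ → ℚ)).mulVec (fun j => (x j : ℚ))
      = fun i => ((A.mulVec x i : ℤ) : ℚ) := by
  funext i
  simp [Matrix.mulVec, dotProduct, Matrix.map_apply]

/-- Proposition `projT` (existence part): for any bounded system `(F^B)` with
`b ∈ L(A)`, there exists a strong aggregation matrix `T` of size one. -/
theorem stmt_4 (m n : ℕ) (A : Matrix (Fin m) (Fin n) ℤ) (b : Fin m → ℤ)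
    (u : Fin n → ℤ) (hu : 0 ≤ u)
    (hb : ∃ x : Fin n → ℤ, A.mulVec x = b) :
    ∃ T : Matrix (Fin 1) (Fin m) ℚ,
      {x : Fin n → ℤ | 0 ≤ x ∧ x ≤ u ∧ A.mulVec x = b} =
        {x : Fin n → ℤ | 0 ≤ x ∧ x ≤ u ∧
          (T * A.map (Int.cast : ℤ → ℚ)).mulVec (fun j => (x j : ℚ)) =
            T.mulVec (fun i => (b i : ℚ))} := by
  classical
  have hbox : (Set.Icc (0 : Fin n → ℤ) u).Finite := Set.finite_Icc 0 u
  set V : Set (Fin m → ℚ) :=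
    (fun x : Fin n → ℤ => fun i => ((A.mulVec x i - b i : ℤ) : ℚ)) ''
      {x ∈ Set.Icc (0 : Fin n → ℤ) u | A.mulVec x ≠ b} with hV
  have hVfin : V.Finite := (hbox.subset (Set.sep_subset _ _)).image _
  have hVne : ∀ v ∈ hVfin.toFinset, v ≠ 0 := by
    intro v hv
    rw [Set.Finite.mem_toFinset, hV] at hv
    obtain ⟨x, ⟨_, hxne⟩, rfl⟩ := hv
    intro h0
    apply hxne
    funext i
    have := congrFun h0 i
    simp only [Pi.zero_apply, Int.cast_eq_zero, sub_eq_zero] at this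
    exact this
  obtain ⟨t, ht⟩ := aux_dual m hVfin.toFinset hVne
  refine ⟨Matrix.of (fun _ i => t i), ?_⟩
  ext x
  simp only [Set.mem_setOf_eq]
  constructor
  · rintro ⟨h0, h1, h2⟩
    refine ⟨h0, h1, ?_⟩
    rw [← Matrix.mulVec_mulVec, cast_mulVec, h2]
  · rintro ⟨h0, h1, h2⟩
    refine ⟨h0, h1, ?_⟩
    by_contra hne
    have hmem : (fun i => ((A.mulVec x i - b i : ℤ) : ℚ)) ∈ hVfin.toFinset := by
      rw [Set.Finite.mem_toFinset, hV]
      exact ⟨x, ⟨Set.mem_Icc.mpr ⟨h0, h1⟩, hne⟩, rfl⟩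
    apply ht _ hmem
    rw [← Matrix.mulVec_mulVec, cast_mulVec] at h2
    have h3 := congrFun h2 0
    simp only [Matrix.mulVec, Matrix.of_apply, dotProduct] at h3
    simp only [dotProduct, Int.cast_sub, mul_sub, Finset.sum_sub_distrib]
    rw [sub_eq_zero]
    exact h3
end

section
/- Let A ∈ ℤ^{m×n}, b ∈ ℤ^m, u ∈ ℤ^n with u ≥ 0, and let M' ∈ ℕ satisfy ‖Ax‖_∞ ≤ M' for all x ∈ ℤ^n with 0 ≤ x ≤ u. Let q₁,…,q_{m−1} be pairwise coprime positive integers, each strictly greater than M' + ‖b‖_∞. Then the row vector T = (1/q₁, 1/q₂, …, 1/q_{m−1}, −1) ∈ ℚ^{1×m} is a strong aggregation matrix for the bounded system (F^B): for every x ∈ ℤ^n with 0 ≤ x ≤ u, Ax = b if and only if (TA)x = Tb. -/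
/-- Corollary `explicitT`: with `m = k + 1`, if `‖Ax‖_∞ ≤ M'` on the box
`0 ≤ x ≤ u` and `q₁, …, q_{m-1}` are pairwise coprime positive integers all
greater than `M' + ‖b‖_∞`, then `T = (1/q₁, …, 1/q_{m-1}, -1)` is a strong
aggregation matrix for the bounded system `(F^B)`. -/
theorem stmt_5 (k n : ℕ) (A : Matrix (Fin (k + 1)) (Fin n) ℤ)
    (b : Fin (k + 1) → ℤ) (u : Fin n → ℤ) (hu : 0 ≤ u)
    (M' : ℕ)
    (hM' : ∀ x : Fin n → ℤ, 0 ≤ x → x ≤ u → ∀ i, |A.mulVec x i| ≤ (M' : ℤ))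
    (q : Fin k → ℤ) (hqpos : ∀ i, 0 < q i)
    (hqcop : ∀ i j, i ≠ j → Int.gcd (q i) (q j) = 1)
    (hqbig : ∀ i j, (M' : ℤ) + |b j| < q i)
    (T : Matrix (Fin 1) (Fin (k + 1)) ℚ)
    (hT : ∀ i : Fin k, T 0 i.castSucc = 1 / (q i : ℚ))
    (hTlast : T 0 (Fin.last k) = -1) :
    ∀ x : Fin n → ℤ, 0 ≤ x → x ≤ u →
      (A.mulVec x = b ↔
        (T * A.map (Int.cast : ℤ → ℚ)).mulVec (fun j => (x j : ℚ)) =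
          T.mulVec (fun i => (b i : ℚ))) := by
  intro x hx0 hxu
  -- cast of mulVec
  have hcast : (A.map (Int.cast : ℤ → ℚ)).mulVec (fun j => (x j : ℚ)) =
      fun i => ((A.mulVec x i : ℤ) : ℚ) := by
    funext i
    simp [Matrix.mulVec, dotProduct, Matrix.map]
  constructor
  · intro h
    rw [← Matrix.mulVec_mulVec, hcast, h]
  · intro h
    rw [← Matrix.mulVec_mulVec, hcast] at h
    set d : Fin (k + 1) → ℤ := fun i => A.mulVec x i - b i with hd
    have heq0 : ∑ i : Fin (k + 1), T 0 i * (d i : ℚ) = 0 := by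
      have h1 : ∑ i : Fin (k+1), T 0 i * ((A.mulVec x i : ℤ) : ℚ) =
          ∑ i : Fin (k+1), T 0 i * ((b i : ℤ) : ℚ) := congrFun h 0
      calc ∑ i : Fin (k+1), T 0 i * (d i : ℚ)
          = ∑ i : Fin (k+1), (T 0 i * ((A.mulVec x i : ℤ) : ℚ)
              - T 0 i * ((b i : ℤ) : ℚ)) := by
            refine Finset.sum_congr rfl fun i _ => ?_
            simp [hd]; ring
        _ = 0 := by rw [Finset.sum_sub_distrib, h1]; ring
    rw [Fin.sum_univ_castSucc] at heq0
    simp only [hTlast] at heq0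
    have hqne : ∀ i : Fin k, (q i : ℚ) ≠ 0 := fun i => by
      exact_mod_cast (hqpos i).ne'
    have heq1 : ∑ i : Fin k, (d i.castSucc : ℚ) / q i = (d (Fin.last k) : ℚ) := by
      have : ∑ i : Fin k, T 0 i.castSucc * (d i.castSucc : ℚ) =
          ∑ i : Fin k, (d i.castSucc : ℚ) / q i := by
        refine Finset.sum_congr rfl fun i _ => ?_
        rw [hT i]; field_simp
      rw [this] at heq0; linarith
    -- bound on d
    have hdbd : ∀ i : Fin k, |d i.castSucc| < q i := by
      intro i
      calc |d i.castSucc| ≤ |A.mulVec x i.castSucc| + |b i.castSucc| := abs_sub _ _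
        _ ≤ (M' : ℤ) + |b i.castSucc| := by
            have := hM' x hx0 hxu i.castSucc; linarith
        _ < q i := hqbig i i.castSucc
    -- products
    set P : Fin k → ℤ := fun i => ∏ j ∈ Finset.univ.erase i, q j with hP
    set Q : ℤ := ∏ j, q j with hQ
    have hQP : ∀ i, q i * P i = Q := fun i =>
      Finset.mul_prod_erase _ _ (Finset.mem_univ i)
    -- integer equation
    have hintQ : ((∑ i : Fin k, d i.castSucc * P i : ℤ) : ℚ) =
        ((d (Fin.last k) * Q : ℤ) : ℚ) := by
      push_cast
      rw [← heq1, Finset.sum_mul]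
      refine Finset.sum_congr rfl fun i _ => ?_
      have : (Q : ℚ) = (q i : ℚ) * (P i : ℚ) := by exact_mod_cast (hQP i).symm
      rw [this]
      rw [div_mul_eq_mul_div, eq_div_iff (hqne i)]
      ring
    have hint : ∑ i : Fin k, d i.castSucc * P i = d (Fin.last k) * Q :=
      Int.cast_injective hintQ
    -- each d i = 0
    have hdz : ∀ i : Fin k, d i.castSucc = 0 := by
      intro i
      have hdvdrest : q i ∣ ∑ j ∈ Finset.univ.erase i, d j.castSucc * P j := by
        refine Finset.dvd_sum fun j hj => ?_
        have hji : j ≠ i := Finset.ne_of_mem_erase hj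
        have : q i ∣ P j :=
          Finset.dvd_prod_of_mem _ (Finset.mem_erase.mpr ⟨hji.symm, Finset.mem_univ i⟩)
        exact this.mul_left _
      have hdvdQ : q i ∣ d (Fin.last k) * Q := ⟨d (Fin.last k) * P i, by rw [← hQP i]; ring⟩
      have hdvdterm : q i ∣ d i.castSucc * P i := by
        have hsplit : d i.castSucc * P i =
            (∑ j : Fin k, d j.castSucc * P j) -
            ∑ j ∈ Finset.univ.erase i, d j.castSucc * P j := by
          rw [← Finset.add_sum_erase _ _ (Finset.mem_univ i)]; ring
        rw [hsplit, hint]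
        exact dvd_sub hdvdQ hdvdrest
      have hcop : IsCoprime (q i) (P i) := by
        refine IsCoprime.prod_right fun j hj => ?_
        exact Int.isCoprime_iff_gcd_eq_one.mpr (hqcop i j (Finset.ne_of_mem_erase hj).symm)
      have : q i ∣ d i.castSucc := hcop.dvd_of_dvd_mul_right hdvdterm
      exact Int.eq_zero_of_abs_lt_dvd this (hdbd i)
    have hlast : d (Fin.last k) = 0 := by
      have : ∑ i : Fin k, (d i.castSucc : ℚ) / q i = 0 := by
        refine Finset.sum_eq_zero fun i _ => ?_
        rw [hdz i]; simp
      rw [this] at heq1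
      exact_mod_cast heq1.symm
    funext i
    have : d i = 0 := by
      refine Fin.lastCases hlast (fun j => hdz j) i
    simpa [hd, sub_eq_zero] using this
end

section
/- Let A ∈ ℤ^{m×n}, b ∈ ℤ^m, and let h ∈ ℤ^m satisfy hᵀA_j ≥ ‖A_j‖₁ + 1 for every column A_j of A (where ‖A_j‖₁ = Σ_i |A_{ij}|). Set M = (max_{1≤i≤m} Σ_j |A_{ij}|)·(‖h‖_∞ + 1)·‖b‖₁ + ‖b‖_∞. Then for every η ∈ ℝ^m with ‖η‖_∞ ≤ 1 and every x ∈ ℝ^n with x ≥ 0 satisfying (h + η)ᵀ(Ax − b) = 0, one has ‖Ax − b‖_∞ ≤ M. In particular the set (−b + C(A)) ∩ {y ∈ ℝ^m : (h+η)ᵀy = 0} is bounded and every y in it satisfies ‖y‖_∞ ≤ M. -/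
/-- Lemma `boundedintersection`: if `hᵀA_j ≥ ‖A_j‖₁ + 1` for every column of
`A`, then with `M = ‖A‖_∞·(‖h‖_∞ + 1)·‖b‖₁ + ‖b‖_∞`, for every perturbation
`η` with `‖η‖_∞ ≤ 1`, any point of `-b + C(A)` on the hyperplane
`{y | (h+η)ᵀy = 0}` has `‖·‖_∞` at most `M`. -/
theorem stmt_7 (m n : ℕ) (hm : 0 < m)
    (A : Matrix (Fin m) (Fin n) ℤ) (b : Fin m → ℤ) (h : Fin m → ℤ)
    (hh : ∀ j : Fin n, (∑ i, |A i j|) + 1 ≤ ∑ i, h i * A i j)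
    (M : ℤ)
    (hM : M =
      (Finset.univ.sup' (Finset.univ_nonempty_iff.mpr ⟨⟨0, hm⟩⟩)
          fun i : Fin m => ∑ j, |A i j|) *
        ((Finset.univ.sup' (Finset.univ_nonempty_iff.mpr ⟨⟨0, hm⟩⟩)
          fun i : Fin m => |h i|) + 1) * (∑ i, |b i|) +
        Finset.univ.sup' (Finset.univ_nonempty_iff.mpr ⟨⟨0, hm⟩⟩)
          fun i : Fin m => |b i|) :
    ∀ η : Fin m → ℝ, (∀ i, |η i| ≤ 1) →
      ∀ x : Fin n → ℝ, 0 ≤ x →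
        (∑ i, ((h i : ℝ) + η i) *
          ((A.map (Int.cast : ℤ → ℝ)).mulVec x i - (b i : ℝ))) = 0 →
        ∀ i, |(A.map (Int.cast : ℤ → ℝ)).mulVec x i - (b i : ℝ)| ≤ (M : ℝ) := by
  intro η hη x hx hcon i
  have hne : (Finset.univ : Finset (Fin m)).Nonempty :=
    Finset.univ_nonempty_iff.mpr ⟨⟨0, hm⟩⟩
  set c : Fin m → ℝ := fun i => (h i : ℝ) + η i with hc
  set Ar : ℝ := ((Finset.univ.sup' hne fun i : Fin m => ∑ j, |A i j| : ℤ) : ℝ) with hAr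
  set Hr : ℝ := ((Finset.univ.sup' hne fun i : Fin m => |h i| : ℤ) : ℝ) with hHr
  set Br : ℝ := ((Finset.univ.sup' hne fun i : Fin m => |b i| : ℤ) : ℝ) with hBr
  set B1 : ℝ := ((∑ i, |b i| : ℤ) : ℝ) with hB1
  -- basic bounds
  have hArow : ((∑ j, |A i j| : ℤ) : ℝ) ≤ Ar := by
    exact_mod_cast Int.cast_le.mpr (Finset.le_sup' (fun i : Fin m => ∑ j, |A i j|)
      (Finset.mem_univ i))
  have hAentry : ∀ j, |(A i j : ℝ)| ≤ Ar := by
    intro j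
    have h1 : |A i j| ≤ ∑ j', |A i j'| :=
      Finset.single_le_sum (fun k _ => abs_nonneg (A i k)) (Finset.mem_univ j)
    have : ((|A i j| : ℤ) : ℝ) ≤ Ar := le_trans (by exact_mod_cast h1) hArow
    calc |(A i j : ℝ)| = ((|A i j| : ℤ) : ℝ) := by push_cast; ring
      _ ≤ Ar := this
  have hAr0 : 0 ≤ Ar := le_trans (by positivity) hArow
  have hHk : ∀ k, |(h k : ℝ)| ≤ Hr := by
    intro k
    have : |h k| ≤ Finset.univ.sup' hne fun i : Fin m => |h i| :=
      Finset.le_sup' (fun i : Fin m => |h i|) (Finset.mem_univ k)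
    calc |(h k : ℝ)| = ((|h k| : ℤ) : ℝ) := by push_cast; ring
      _ ≤ Hr := by rw [hHr]; exact_mod_cast this
  have hBk : ∀ k, |(b k : ℝ)| ≤ Br := by
    intro k
    have : |b k| ≤ Finset.univ.sup' hne fun i : Fin m => |b i| :=
      Finset.le_sup' (fun i : Fin m => |b i|) (Finset.mem_univ k)
    calc |(b k : ℝ)| = ((|b k| : ℤ) : ℝ) := by push_cast; ring
      _ ≤ Br := by rw [hBr]; exact_mod_cast this
  have hB10 : 0 ≤ B1 := by
    rw [hB1]; positivity
  -- column bound: each (h+η)ᵀA_j ≥ 1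
  have hcol : ∀ j, (1 : ℝ) ≤ ∑ k, c k * (A k j : ℝ) := by
    intro j
    have h1 : ((∑ k, |A k j| : ℤ) : ℝ) + 1 ≤ ∑ k, (h k : ℝ) * (A k j : ℝ) := by
      exact_mod_cast hh j
    have h2 : |∑ k, η k * (A k j : ℝ)| ≤ ((∑ k, |A k j| : ℤ) : ℝ) := by
      calc |∑ k, η k * (A k j : ℝ)| ≤ ∑ k, |η k * (A k j : ℝ)| :=
            Finset.abs_sum_le_sum_abs _ _
        _ ≤ ∑ k, ((|A k j| : ℤ) : ℝ) := by
            apply Finset.sum_le_sum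
            intro k _
            rw [abs_mul]
            have := mul_le_mul_of_nonneg_right (hη k) (abs_nonneg ((A k j : ℝ)))
            calc |η k| * |(A k j : ℝ)| ≤ 1 * |(A k j : ℝ)| := this
              _ = ((|A k j| : ℤ) : ℝ) := by rw [one_mul]; push_cast; ring
        _ = ((∑ k, |A k j| : ℤ) : ℝ) := by push_cast; ring
    have hexp : ∑ k, c k * (A k j : ℝ)
        = (∑ k, (h k : ℝ) * (A k j : ℝ)) + ∑ k, η k * (A k j : ℝ) := by
      rw [← Finset.sum_add_distrib]
      apply Finset.sum_congr rfl
      intro k _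
      simp [hc]; ring
    have := neg_abs_le (∑ k, η k * (A k j : ℝ))
    linarith
  -- rewrite the constraint
  have hswap : ∑ k, c k * (A.map (Int.cast : ℤ → ℝ)).mulVec x k
      = ∑ j, (∑ k, c k * (A k j : ℝ)) * x j := by
    simp only [Matrix.mulVec, dotProduct, Matrix.map_apply, Finset.mul_sum,
      Finset.sum_mul]
    rw [Finset.sum_comm]
    simp [mul_assoc]
  have hcon2 : ∑ j, (∑ k, c k * (A k j : ℝ)) * x j = ∑ k, c k * (b k : ℝ) := by
    have h0 : (∑ k, c k * (A.map (Int.cast : ℤ → ℝ)).mulVec x k)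
        - (∑ k, c k * (b k : ℝ)) = 0 := by
      rw [← Finset.sum_sub_distrib]
      simpa [mul_sub] using hcon
    linarith [hswap]
  set S : ℝ := ∑ j, x j with hSdef
  have hS0 : 0 ≤ S := Finset.sum_nonneg fun j _ => hx j
  have hS1 : S ≤ ∑ j, (∑ k, c k * (A k j : ℝ)) * x j := by
    apply Finset.sum_le_sum
    intro j _
    have h1 := hcol j
    have h2 : (0 : ℝ) ≤ x j := hx j
    nlinarith
  have hrhs : ∑ k, c k * (b k : ℝ) ≤ (Hr + 1) * B1 := by
    calc ∑ k, c k * (b k : ℝ) ≤ ∑ k, (Hr + 1) * ((|b k| : ℤ) : ℝ) := by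
          apply Finset.sum_le_sum
          intro k _
          have h1 : c k * (b k : ℝ) ≤ |c k| * |(b k : ℝ)| :=
            (le_abs_self _).trans (abs_mul _ _).le
          have h2 : |c k| ≤ Hr + 1 :=
            (abs_add_le _ _).trans (add_le_add (hHk k) (hη k))
          have h3 : |(b k : ℝ)| = ((|b k| : ℤ) : ℝ) := by push_cast; ring
          nlinarith [abs_nonneg ((b k : ℝ)), abs_nonneg (c k)]
      _ = (Hr + 1) * B1 := by rw [← Finset.mul_sum, hB1]; congr 1; push_cast; ring
  have hSb : S ≤ (Hr + 1) * B1 := le_trans hS1 (hcon2 ▸ hrhs)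
  have hv : |(A.map (Int.cast : ℤ → ℝ)).mulVec x i| ≤ Ar * S := by
    have : (A.map (Int.cast : ℤ → ℝ)).mulVec x i = ∑ j, (A i j : ℝ) * x j := by
      simp [Matrix.mulVec, dotProduct, Matrix.map_apply]
    rw [this]
    calc |∑ j, (A i j : ℝ) * x j| ≤ ∑ j, |(A i j : ℝ) * x j| :=
          Finset.abs_sum_le_sum_abs _ _
      _ ≤ ∑ j, Ar * x j := by
          apply Finset.sum_le_sum
          intro j _
          rw [abs_mul, abs_of_nonneg (hx j)]
          exact mul_le_mul_of_nonneg_right (hAentry j) (hx j)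
      _ = Ar * S := by rw [Finset.mul_sum]
  have hMcast : (M : ℝ) = Ar * (Hr + 1) * B1 + Br := by
    rw [hAr, hHr, hBr, hB1, hM]; push_cast; ring
  have hfinal : Ar * S ≤ Ar * ((Hr + 1) * B1) :=
    mul_le_mul_of_nonneg_left hSb hAr0
  have hb := hBk i
  have := abs_sub ((A.map (Int.cast : ℤ → ℝ)).mulVec x i) ((b i : ℝ))
  calc |(A.map (Int.cast : ℤ → ℝ)).mulVec x i - (b i : ℝ)|
      ≤ |(A.map (Int.cast : ℤ → ℝ)).mulVec x i| + |(b i : ℝ)| := abs_sub _ _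
    _ ≤ Ar * S + Br := add_le_add hv hb
    _ ≤ Ar * ((Hr + 1) * B1) + Br := by linarith
    _ = (M : ℝ) := by rw [hMcast]; ring
end

section
/- Let A ∈ ℤ^{m×n}, b ∈ ℤ^m, and let h ∈ ℤ^m satisfy hᵀA_j ≥ ‖A_j‖₁ + 1 for every column A_j of A. Set M = (max_{1≤i≤m} Σ_j |A_{ij}|)·(‖h‖_∞ + 1)·‖b‖₁ + ‖b‖_∞, and let q₁,…,q_m be pairwise coprime positive integers, each strictly greater than M. Let T = hᵀ + (1/q₁, 1/q₂, …, 1/q_m) ∈ ℚ^{1×m}. Then the hyperplane {y ∈ ℝ^m : Ty = 0} avoids −b + L⁺(A); explicitly, for every x ∈ ℤ^n with x ≥ 0, if T(Ax − b) = 0 then Ax = b. -/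
/-- Proposition `pointedaggregate`: with `hᵀA_j ≥ ‖A_j‖₁ + 1` for every column,
`M = ‖A‖_∞·(‖h‖_∞ + 1)·‖b‖₁ + ‖b‖_∞`, and `q₁, …, q_m` pairwise coprime positive
integers all greater than `M`, the hyperplane `{y | (h + (1/q₁,…,1/q_m))ᵀ y = 0}`
avoids `-b + L⁺(A)`: for integer `x ≥ 0`, `T(Ax - b) = 0` implies `Ax = b`. -/
theorem stmt_8 (m n : ℕ) (hm : 0 < m)
    (A : Matrix (Fin m) (Fin n) ℤ) (b : Fin m → ℤ) (h : Fin m → ℤ)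
    (hh : ∀ j : Fin n, (∑ i, |A i j|) + 1 ≤ ∑ i, h i * A i j)
    (M : ℤ)
    (hM : M =
      (Finset.univ.sup' (Finset.univ_nonempty_iff.mpr ⟨⟨0, hm⟩⟩)
          fun i : Fin m => ∑ j, |A i j|) *
        ((Finset.univ.sup' (Finset.univ_nonempty_iff.mpr ⟨⟨0, hm⟩⟩)
          fun i : Fin m => |h i|) + 1) * (∑ i, |b i|) +
        Finset.univ.sup' (Finset.univ_nonempty_iff.mpr ⟨⟨0, hm⟩⟩)
          fun i : Fin m => |b i|)
    (q : Fin m → ℤ) (hqpos : ∀ i, 0 < q i)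
    (hqcop : ∀ i j, i ≠ j → Int.gcd (q i) (q j) = 1)
    (hqbig : ∀ i, M < q i) :
    ∀ x : Fin n → ℤ, 0 ≤ x →
      (∑ i, ((h i : ℚ) + 1 / (q i : ℚ)) * ((A.mulVec x i - b i : ℤ) : ℚ)) = 0 →
      A.mulVec x = b := by
  intro x hx hT
  have hne : (Finset.univ : Finset (Fin m)).Nonempty :=
    Finset.univ_nonempty_iff.mpr ⟨⟨0, hm⟩⟩
  set α : ℤ := Finset.univ.sup' hne (fun i : Fin m => ∑ j, |A i j|) with hαdef
  set H : ℤ := Finset.univ.sup' hne (fun i : Fin m => |h i|) with hHdef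
  set B : ℤ := Finset.univ.sup' hne (fun i : Fin m => |b i|) with hBdef
  set y : Fin m → ℤ := fun i => A.mulVec x i - b i with hydef
  have hq0 : ∀ i, (q i : ℚ) ≠ 0 := fun i => by exact_mod_cast (hqpos i).ne'
  have hq1 : ∀ i, (1 : ℚ) ≤ (q i : ℚ) := fun i => by exact_mod_cast hqpos i
  set N : ℤ := ∑ i, h i * y i with hNdef
  -- split the hyperplane equation
  have hTsplit : (∑ i, (y i : ℚ) / q i) = -(N : ℚ) := by
    have e1 : ∑ i, ((h i : ℚ) + 1 / q i) * (y i : ℚ)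
        = (∑ i, (h i : ℚ) * (y i : ℚ)) + ∑ i, (y i : ℚ) / q i := by
      rw [← Finset.sum_add_distrib]
      exact Finset.sum_congr rfl fun i _ => by ring
    have e2 : ((N : ℤ) : ℚ) = ∑ i, (h i : ℚ) * (y i : ℚ) := by
      rw [hNdef]; push_cast; rfl
    rw [e1, ← e2] at hT
    linarith
  -- |N| ≤ ∑ |y i|
  have hNabs : |N| ≤ ∑ i, |y i| := by
    have h1 : |(N : ℚ)| ≤ ∑ i, (|y i| : ℚ) := by
      rw [show (N : ℚ) = -(∑ i, (y i : ℚ) / q i) by rw [hTsplit]; ring, abs_neg]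
      calc |∑ i, (y i : ℚ) / q i| ≤ ∑ i, |(y i : ℚ) / q i| := Finset.abs_sum_le_sum_abs _ _
        _ ≤ ∑ i, (|y i| : ℚ) := by
            apply Finset.sum_le_sum
            intro i _
            rw [abs_div, abs_of_pos (by exact_mod_cast hqpos i : (0:ℚ) < q i)]
            exact div_le_self (by positivity) (hq1 i)
    exact_mod_cast h1
  have hmv : ∀ i, A.mulVec x i = ∑ j, A i j * x j := fun i => by
    simp [Matrix.mulVec, dotProduct]
  -- key inequality
  have key1 : (∑ i, |A.mulVec x i|) + (∑ j, x j) ≤ ∑ i, h i * A.mulVec x i := by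
    have c1 : ∑ i, h i * A.mulVec x i = ∑ j, (∑ i, h i * A i j) * x j := by
      simp_rw [hmv, Finset.mul_sum, Finset.sum_mul]
      rw [Finset.sum_comm]
      exact Finset.sum_congr rfl fun j _ => Finset.sum_congr rfl fun i _ => by ring
    have c2 : ∑ j, ((∑ i, |A i j|) + 1) * x j ≤ ∑ j, (∑ i, h i * A i j) * x j :=
      Finset.sum_le_sum fun j _ => mul_le_mul_of_nonneg_right (hh j) (hx j)
    have c3 : ∑ j, ((∑ i, |A i j|) + 1) * x j
        = (∑ i, ∑ j, |A i j| * x j) + ∑ j, x j := by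
      rw [Finset.sum_comm (f := fun i j => |A i j| * x j), ← Finset.sum_add_distrib]
      exact Finset.sum_congr rfl fun j _ => by rw [add_mul, one_mul, Finset.sum_mul]
    have c4 : ∑ i, |A.mulVec x i| ≤ ∑ i, ∑ j, |A i j| * x j := by
      apply Finset.sum_le_sum
      intro i _
      rw [hmv i]
      calc |∑ j, A i j * x j| ≤ ∑ j, |A i j * x j| := Finset.abs_sum_le_sum_abs _ _
        _ = ∑ j, |A i j| * x j := Finset.sum_congr rfl fun j _ => by
            rw [abs_mul, abs_of_nonneg (hx j)]
    linarith
  -- h·b bound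
  have hHb : ∀ i : Fin m, |h i| ≤ H := fun i => Finset.le_sup' (fun i => |h i|) (Finset.mem_univ i)
  have hBb : ∀ i : Fin m, |b i| ≤ B := fun i => Finset.le_sup' (fun i => |b i|) (Finset.mem_univ i)
  have hb : ∑ i, h i * b i ≤ H * ∑ i, |b i| := by
    rw [Finset.mul_sum]
    calc ∑ i, h i * b i ≤ ∑ i, |h i * b i| :=
          Finset.sum_le_sum fun i _ => le_abs_self _
      _ ≤ ∑ i, H * |b i| := Finset.sum_le_sum fun i _ => by
          rw [abs_mul]; exact mul_le_mul_of_nonneg_right (hHb i) (abs_nonneg _)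
  have hNsplit : N = (∑ i, h i * A.mulVec x i) - ∑ i, h i * b i := by
    rw [hNdef, ← Finset.sum_sub_distrib]
    exact Finset.sum_congr rfl fun i _ => by simp [hydef]; ring
  have hysum : ∑ i, |y i| ≤ (∑ i, |A.mulVec x i|) + ∑ i, |b i| := by
    rw [← Finset.sum_add_distrib]
    exact Finset.sum_le_sum fun i _ => by
      simpa [hydef] using abs_sub (A.mulVec x i) (b i)
  -- bound on ∑ x j
  have hs : (∑ j, x j) ≤ (H + 1) * (∑ i, |b i|) := by
    have h2 : ∑ i, h i * A.mulVec x i ≤ (∑ i, |y i|) + ∑ i, h i * b i := by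
      have := le_abs_self N
      linarith [hNsplit, hNabs]
    nlinarith [key1, hysum, hb]
  have hα0 : 0 ≤ α := le_trans (Finset.sum_nonneg fun j _ => abs_nonneg _)
    (Finset.le_sup' (fun i : Fin m => ∑ j, |A i j|) (Finset.mem_univ (⟨0, hm⟩ : Fin m)))
  have hs0 : 0 ≤ ∑ j, x j := Finset.sum_nonneg fun j _ => hx j
  -- per-coordinate bound
  have hyk : ∀ k, |y k| ≤ M := by
    intro k
    have h1 : |A.mulVec x k| ≤ α * ∑ j, x j := by
      rw [hmv k]
      calc |∑ j, A k j * x j| ≤ ∑ j, |A k j * x j| := Finset.abs_sum_le_sum_abs _ _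
        _ ≤ ∑ j, α * x j := Finset.sum_le_sum fun j _ => by
            rw [abs_mul, abs_of_nonneg (hx j)]
            refine mul_le_mul_of_nonneg_right ?_ (hx j)
            calc |A k j| ≤ ∑ j', |A k j'| :=
                  Finset.single_le_sum (f := fun j' => |A k j'|) (fun j' _ => abs_nonneg _) (Finset.mem_univ j)
              _ ≤ α := Finset.le_sup' (fun i : Fin m => ∑ j, |A i j|) (Finset.mem_univ k)
        _ = α * ∑ j, x j := (Finset.mul_sum _ _ _).symm
    have h2 : |y k| ≤ |A.mulVec x k| + |b k| := by
      simpa [hydef] using abs_sub (A.mulVec x k) (b k)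
    have h3 : α * (∑ j, x j) ≤ α * ((H + 1) * ∑ i, |b i|) :=
      mul_le_mul_of_nonneg_left hs hα0
    have h4 : |b k| ≤ B := hBb k
    rw [hM]
    have : α * ((H + 1) * ∑ i, |b i|) = α * (H + 1) * ∑ i, |b i| := by ring
    rw [hαdef, hHdef, hBdef] at *
    linarith
  -- divisibility argument
  have hykq : ∀ k, |y k| < q k := fun k => lt_of_le_of_lt (hyk k) (hqbig k)
  set Q : ℤ := ∏ i, q i with hQdef
  set P : Fin m → ℤ := fun k => ∏ i ∈ Finset.univ.erase k, q i with hPdef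
  have hQP : ∀ k, q k * P k = Q := fun k =>
    Finset.mul_prod_erase Finset.univ q (Finset.mem_univ k)
  have hC : ∑ i, y i * P i = -N * Q := by
    have hcast : ((∑ i, y i * P i : ℤ) : ℚ) = ((-N * Q : ℤ) : ℚ) := by
      push_cast [hPdef, hQdef]
      have e : ∀ i ∈ Finset.univ, (y i : ℚ) * (∏ j ∈ Finset.univ.erase i, (q j : ℚ))
          = ((y i : ℚ) / q i) * ∏ j, (q j : ℚ) := by
        intro i _
        rw [← Finset.mul_prod_erase Finset.univ (fun j => (q j : ℚ)) (Finset.mem_univ i)]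
        rw [div_mul_eq_mul_div, mul_div_assoc, mul_div_cancel_left₀ _ (hq0 i)]
      rw [Finset.sum_congr rfl e, ← Finset.sum_mul, hTsplit]
    exact_mod_cast hcast
  have hy0 : ∀ k, y k = 0 := by
    intro k
    have hk1 : q k ∣ ∑ i ∈ Finset.univ.erase k, y i * P i := by
      apply Finset.dvd_sum
      intro i hi
      have hik : k ≠ i := fun e => (Finset.mem_erase.mp hi).1 e.symm
      exact Dvd.dvd.mul_left
        (Finset.dvd_prod_of_mem q (Finset.mem_erase.mpr ⟨hik, Finset.mem_univ k⟩)) _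
    have hk2 : q k ∣ -N * Q := Dvd.dvd.mul_left
      (Finset.dvd_prod_of_mem q (Finset.mem_univ k)) _
    have hsplit : y k * P k = -N * Q - ∑ i ∈ Finset.univ.erase k, y i * P i := by
      have hte : ∑ i ∈ Finset.univ.erase k, y i * P i + y k * P k = ∑ i, y i * P i :=
        Finset.sum_erase_add Finset.univ (fun i => y i * P i) (Finset.mem_univ k)
      linarith [hC, hte]
    have hk3 : q k ∣ y k * P k := hsplit ▸ dvd_sub hk2 hk1
    have hcop : IsCoprime (q k) (P k) := by
      rw [hPdef]
      apply IsCoprime.prod_right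
      intro i hi
      have : k ≠ i := fun e => (Finset.mem_erase.mp hi).1 e.symm
      exact Int.isCoprime_iff_gcd_eq_one.mpr (hqcop k i this)
    have hk4 : q k ∣ y k := hcop.dvd_of_dvd_mul_right hk3
    exact Int.eq_zero_of_abs_lt_dvd hk4 (hykq k)
  funext i
  have := hy0 i
  simpa [hydef, sub_eq_zero] using this
end

section
/- Let A ∈ ℤ^{m×n} and b ∈ ℤ^m, and assume the cone C(A) = {Ax : x ∈ ℝ^n, x ≥ 0} is pointed. Then there exists a strong aggregation matrix T ∈ ℚ^{1×m} of size one for the system (F): {x ∈ ℤ^n : x ≥ 0, Ax = b} = {x ∈ ℤ^n : x ≥ 0, (TA)x = Tb}. -/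
open Matrix Finset

/-- A dot product functional is continuous. -/
private lemma aux_cont_dot {m : ℕ} (c : Fin m → ℝ) :
    Continuous (fun t : Fin m → ℝ => t ⬝ᵥ c) := by
  unfold dotProduct
  exact continuous_finset_sum _ fun i _ => (continuous_apply i).mul continuous_const

/-- Any nonempty open subset of `Fin m → ℝ` contains a point with rational coordinates. -/
private lemma aux_rat_point {m : ℕ} {U : Set (Fin m → ℝ)} (hU : IsOpen U) (hne : U.Nonempty) :
    ∃ q : Fin m → ℚ, (fun i => (q i : ℝ)) ∈ U := by
  obtain ⟨x, hx⟩ := hne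
  obtain ⟨ε, hε, hball⟩ := Metric.isOpen_iff.1 hU x hx
  choose q hq using fun i => exists_rat_near (x i) (half_pos hε)
  refine ⟨q, hball ?_⟩
  rw [Metric.mem_ball, dist_pi_lt_iff hε]
  intro i
  have := hq i
  rw [Real.dist_eq, abs_sub_comm]
  linarith [abs_sub_comm (x i) ((q i : ℝ))]

/-- complement of a hyperplane (or everything if normal is zero) -/
private def aux_hyp {m : ℕ} (u : Fin m → ℝ) : Set (Fin m → ℝ) :=
  if u = 0 then Set.univ else {t | t ⬝ᵥ u ≠ 0}

private lemma aux_hyp_open {m : ℕ} (u : Fin m → ℝ) : IsOpen (aux_hyp u) := by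
  unfold aux_hyp
  split_ifs
  · exact isOpen_univ
  · exact isOpen_compl_iff.2 ((isClosed_singleton (x := (0:ℝ))).preimage (aux_cont_dot u))

private lemma aux_hyp_dense {m : ℕ} (u : Fin m → ℝ) : Dense (aux_hyp u) := by
  unfold aux_hyp
  split_ifs with h
  · exact dense_univ
  · rw [Metric.dense_iff]
    intro x r hr
    by_cases hx : x ⬝ᵥ u ≠ 0
    · exact ⟨x, Metric.mem_ball_self hr, hx⟩
    · push_neg at hx
      have huu0 : (0:ℝ) ≤ u ⬝ᵥ u := Finset.sum_nonneg fun i _ => mul_self_nonneg _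
      have huu : (0:ℝ) < u ⬝ᵥ u := by
        rcases lt_or_eq_of_le huu0 with h' | h'
        · exact h'
        · exact absurd ((dotProduct_self_eq_zero).1 h'.symm) h
      set s : ℝ := r / (2 * (‖u‖ + 1)) with hs
      have hupos : (0:ℝ) < ‖u‖ + 1 := by positivity
      have hspos : 0 < s := by positivity
      refine ⟨x + s • u, ?_, ?_⟩
      · rw [Metric.mem_ball, dist_eq_norm, add_sub_cancel_left, norm_smul, Real.norm_eq_abs,
          abs_of_pos hspos]
        calc s * ‖u‖ < s * (‖u‖ + 1) := by nlinarith
        _ = r / 2 := by rw [hs]; field_simp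
        _ < r := by linarith
      · simp only [Set.mem_setOf_eq, add_dotProduct, hx, zero_add,
          smul_dotProduct, smul_eq_mul]
        exact mul_ne_zero (ne_of_gt hspos) (ne_of_gt huu)

/-- From 0 not in the convex hull of a finite set, get a strictly positive functional. -/
private lemma aux_pos_functional {m : ℕ} (S : Set (Fin m → ℝ)) (hS : S.Finite)
    (h0 : (0 : Fin m → ℝ) ∉ convexHull ℝ S) :
    ∃ w : Fin m → ℝ, ∀ v ∈ S, 0 < w ⬝ᵥ v := by
  obtain ⟨f, u, hfu, hu0⟩ := geometric_hahn_banach_closed_point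
    (convex_convexHull ℝ S) (hS.isCompact_convexHull (𝕜 := ℝ)).isClosed h0
  have hu : u < 0 := by simpa using hu0
  refine ⟨fun i => -f (Pi.single i (1:ℝ)), fun v hv => ?_⟩
  have hfv : f v < u := hfu v (subset_convexHull ℝ S hv)
  have hrepr : f v = ∑ i, v i * f (Pi.single i (1:ℝ)) := by
    conv_lhs => rw [← Finset.univ_sum_single v]
    rw [map_sum]
    refine Finset.sum_congr rfl fun i _ => ?_
    have : (Pi.single i (v i) : Fin m → ℝ) = v i • (Pi.single i (1:ℝ) : Fin m → ℝ) := by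
      rw [← Pi.single_smul, smul_eq_mul, mul_one]
    rw [this, _root_.map_smul, smul_eq_mul]
  have : (fun i => -f (Pi.single i (1:ℝ))) ⬝ᵥ v = -f v := by
    rw [hrepr, dotProduct, ← Finset.sum_neg_distrib]
    exact Finset.sum_congr rfl fun i _ => by ring
  rw [this]
  linarith

/-- Proposition `onerowpointed` (existence part): if the cone
`C(A) = {Ax : x ≥ 0}` is pointed, then there exists a strong aggregation
matrix `T ∈ ℚ^{1×m}` of size one for the system `(F)`. -/
theorem stmt_9 (m n : ℕ) (A : Matrix (Fin m) (Fin n) ℤ) (b : Fin m → ℤ)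
    (hpointed : ∀ v : Fin m → ℝ,
      (∃ x : Fin n → ℝ, 0 ≤ x ∧ v = (A.map (Int.cast : ℤ → ℝ)).mulVec x) →
      (∃ x : Fin n → ℝ, 0 ≤ x ∧ -v = (A.map (Int.cast : ℤ → ℝ)).mulVec x) →
      v = 0) :
    ∃ T : Matrix (Fin 1) (Fin m) ℚ,
      {x : Fin n → ℤ | 0 ≤ x ∧ A.mulVec x = b} =
        {x : Fin n → ℤ | 0 ≤ x ∧
          (T * A.map (Int.cast : ℤ → ℚ)).mulVec (fun j => (x j : ℚ)) =
            T.mulVec (fun i => (b i : ℚ))} := by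
  classical
  set Ar : Matrix (Fin m) (Fin n) ℝ := A.map (Int.cast : ℤ → ℝ) with hAr
  set col : Fin n → (Fin m → ℝ) := fun j => Arᵀ j with hcol
  set bR : Fin m → ℝ := fun i => (b i : ℝ) with hbR
  -- cast lemmas
  have castR : ∀ x : Fin n → ℤ, Ar.mulVec (fun j => ((x j : ℝ))) =
      fun i => ((A.mulVec x i : ℤ) : ℝ) := by
    intro x
    funext i
    simp only [hAr, Matrix.mulVec, dotProduct, Matrix.map_apply]
    push_cast
    rfl
  -- Step A : 0 is not in the convex hull of the nonzero columns
  set S : Set (Fin m → ℝ) := col '' {j | col j ≠ 0} with hS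
  have hSfin : S.Finite := (Set.toFinite _).image _
  have h0 : (0 : Fin m → ℝ) ∉ convexHull ℝ S := by
    intro h0
    obtain ⟨ι, _, w, z, hw0, hw1, hzS, hsum⟩ := mem_convexHull_iff_exists_fintype.1 h0
    have hex : ∃ i₀, 0 < w i₀ := by
      by_contra hc
      push_neg at hc
      have : (∑ i, w i) ≤ 0 := Finset.sum_nonpos fun i _ => hc i
      rw [hw1] at this; linarith
    obtain ⟨i₀, hi₀⟩ := hex
    choose g hgne hgz using fun i => (hzS i : z i ∈ S)
    set v : Fin m → ℝ := w i₀ • z i₀ with hv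
    have h1 : ∃ x : Fin n → ℝ, 0 ≤ x ∧ v = Ar.mulVec x := by
      refine ⟨w i₀ • (Pi.single (g i₀) (1:ℝ) : Fin n → ℝ), ?_, ?_⟩
      · intro j
        simp only [Pi.smul_apply, smul_eq_mul]
        refine mul_nonneg (hw0 i₀) ?_
        rw [Pi.single_apply]
        split_ifs <;> norm_num
      · rw [Matrix.mulVec_smul, Matrix.mulVec_single_one, hv, ← hgz i₀]; rfl
    have h2 : ∃ x : Fin n → ℝ, 0 ≤ x ∧ -v = Ar.mulVec x := by
      refine ⟨∑ i ∈ Finset.univ.erase i₀, w i • (Pi.single (g i) (1:ℝ) : Fin n → ℝ), ?_, ?_⟩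
      · intro j
        simp only [Finset.sum_apply]
        refine Finset.sum_nonneg fun i _ => ?_
        simp only [Pi.smul_apply, smul_eq_mul]
        refine mul_nonneg (hw0 i) ?_
        rw [Pi.single_apply]
        split_ifs <;> norm_num
      · have hmv : Ar.mulVec (∑ i ∈ Finset.univ.erase i₀,
              w i • (Pi.single (g i) (1:ℝ) : Fin n → ℝ)) =
            ∑ i ∈ Finset.univ.erase i₀, w i • z i := by
          rw [← Matrix.mulVecLin_apply, map_sum]
          refine Finset.sum_congr rfl fun i _ => ?_
          rw [_root_.map_smul, Matrix.mulVecLin_apply, Matrix.mulVec_single_one, ← hgz i]; rfl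
        rw [hmv]
        have h := Finset.add_sum_erase Finset.univ (fun i => w i • z i) (Finset.mem_univ i₀)
        rw [hsum] at h
        rw [hv]
        exact (eq_neg_of_add_eq_zero_right h).symm
    have hv0 : v = 0 := hpointed v h1 h2
    rw [hv, smul_eq_zero] at hv0
    rcases hv0 with h | h
    · exact absurd h (ne_of_gt hi₀)
    · exact (hgne i₀) (by rw [hgz i₀]; exact h)
  -- Step B : strictly positive functional w on nonzero columns
  obtain ⟨w, hw⟩ := aux_pos_functional S hSfin h0
  have hwcol : ∀ j, col j ≠ 0 → 0 < w ⬝ᵥ col j := fun j hj =>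
    hw (col j) ⟨j, hj, rfl⟩
  -- Step C : uniform threshold δ and bound N
  set K : Finset (Fin n) := Finset.univ.filter (fun j => col j ≠ 0) with hK
  set δ : ℝ := if hKne : K.Nonempty then K.inf' hKne (fun j => w ⬝ᵥ col j) else 1 with hδ
  have hδpos : 0 < δ := by
    rw [hδ]
    split_ifs with hKne
    · obtain ⟨j, hjK, hj⟩ := Finset.exists_mem_eq_inf' hKne (fun j => w ⬝ᵥ col j)
      rw [hj]
      exact hwcol j (by simpa [hK] using hjK)
    · exact one_pos
  have hδle : ∀ j ∈ K, δ ≤ w ⬝ᵥ col j := by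
    intro j hj
    rw [hδ]
    rw [dif_pos ⟨j, hj⟩]
    exact Finset.inf'_le _ hj
  set β : ℝ := w ⬝ᵥ bR with hβ
  obtain ⟨N, hN⟩ := exists_nat_ge ((β + 1) / (δ / 2))
  have hNδ : β + 1 ≤ N * (δ / 2) := by
    rw [div_le_iff₀ (by linarith)] at hN
    linarith
  -- Step D : finite candidate set
  set F : Finset (Fin m → ℤ) :=
    (Finset.Icc (0 : Fin n → ℤ) (fun _ => (N : ℤ))).image (A.mulVec) with hF
  -- Step E : choose rational t avoiding hyperplanes
  set U₀ : Set (Fin m → ℝ) :=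
    {t | (∀ j ∈ K, δ / 2 < t ⬝ᵥ col j) ∧ t ⬝ᵥ bR < β + 1} with hU₀
  have hU₀open : IsOpen U₀ := by
    rw [hU₀]
    have h1 : IsOpen {t : Fin m → ℝ | ∀ j ∈ K, δ / 2 < t ⬝ᵥ col j} := by
      have : {t : Fin m → ℝ | ∀ j ∈ K, δ / 2 < t ⬝ᵥ col j} =
          ⋂ j ∈ K, {t | δ / 2 < t ⬝ᵥ col j} := by
        ext t; simp
      rw [this]
      exact isOpen_biInter_finset fun j _ =>
        isOpen_lt continuous_const (aux_cont_dot (col j))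
    have h2 : IsOpen {t : Fin m → ℝ | t ⬝ᵥ bR < β + 1} :=
      isOpen_lt (aux_cont_dot bR) continuous_const
    exact (h1.inter h2)
  have hwU₀ : w ∈ U₀ := by
    constructor
    · intro j hj
      have := hδle j hj
      linarith
    · rw [hβ]; linarith
  set D : Set (Fin m → ℝ) := ⋂ v : F, aux_hyp ((fun i => ((v : Fin m → ℤ) i : ℝ)) - bR)
    with hD
  have hDopen : IsOpen D := isOpen_iInter_of_finite fun v => aux_hyp_open _
  have hDdense : Dense D := dense_iInter_of_isOpen (fun v => aux_hyp_open _)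
    (fun v => aux_hyp_dense _)
  have hne : (U₀ ∩ D).Nonempty := by
    obtain ⟨t, htD, htU₀⟩ := hDdense.exists_mem_open hU₀open ⟨w, hwU₀⟩
    exact ⟨t, htU₀, htD⟩
  obtain ⟨q, hq⟩ := aux_rat_point (hU₀open.inter hDopen) hne
  set tR : Fin m → ℝ := fun i => (q i : ℝ) with htR
  obtain ⟨htU₀, htD⟩ := hq
  -- Step F : the aggregation matrix and conclusion
  refine ⟨Matrix.of (fun (_ : Fin 1) i => q i), ?_⟩
  have hAqx : ∀ x : Fin n → ℤ,
      (A.map (Int.cast : ℤ → ℚ)).mulVec (fun j => (x j : ℚ)) =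
        fun i => ((A.mulVec x i : ℤ) : ℚ) := by
    intro x
    funext i
    simp only [Matrix.mulVec, dotProduct, Matrix.map_apply]
    push_cast
    rfl
  have hTv : ∀ u : Fin m → ℚ,
      (Matrix.of (fun (_ : Fin 1) i => q i)).mulVec u = fun _ => ∑ i, q i * u i := by
    intro u
    funext k
    simp [Matrix.mulVec, dotProduct]
  have hone : ∀ f g : Fin 1 → ℚ, f = g ↔ f 0 = g 0 := by
    intro f g
    constructor
    · intro h; exact congrFun h 0
    · intro h; funext k; fin_cases k; exact h
  have hTiff : ∀ x : Fin n → ℤ,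
      ((Matrix.of (fun (_ : Fin 1) i => q i) * A.map (Int.cast : ℤ → ℚ)).mulVec
          (fun j => (x j : ℚ)) =
        (Matrix.of (fun (_ : Fin 1) i => q i)).mulVec (fun i => (b i : ℚ))) ↔
      (tR ⬝ᵥ (fun i => ((A.mulVec x i : ℤ) : ℝ)) = tR ⬝ᵥ bR) := by
    intro x
    rw [← Matrix.mulVec_mulVec, hAqx x, hTv, hTv, hone]
    have hQ : ((fun (_ : Fin 1) => ∑ i, q i * ((A.mulVec x i : ℤ) : ℚ)) 0 =
        (fun (_ : Fin 1) => ∑ i, q i * (b i : ℚ)) 0) ↔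
        ((∑ i, q i * ((A.mulVec x i : ℤ) : ℚ)) = ∑ i, q i * (b i : ℚ)) := Iff.rfl
    rw [hQ, htR, hbR]
    constructor
    · intro h
      have h' := congrArg (fun r : ℚ => (r : ℝ)) h
      push_cast at h'
      simpa [dotProduct] using h'
    · intro h
      have h' : ((∑ i, q i * ((A.mulVec x i : ℤ) : ℚ) : ℚ) : ℝ) =
          ((∑ i, q i * (b i : ℚ) : ℚ) : ℝ) := by
        push_cast
        simpa [dotProduct] using h
      exact_mod_cast h'
  ext x
  simp only [Set.mem_setOf_eq]
  constructor
  · rintro ⟨hx0, hxb⟩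
    refine ⟨hx0, (hTiff x).2 ?_⟩
    rw [hxb]
  · rintro ⟨hx0, hxT⟩
    refine ⟨hx0, ?_⟩
    have heq : tR ⬝ᵥ (fun i => ((A.mulVec x i : ℤ) : ℝ)) = tR ⬝ᵥ bR := (hTiff x).1 hxT
    -- rewrite LHS as a sum over columns
    have hmv : (fun i => ((A.mulVec x i : ℤ) : ℝ)) = Ar.mulVec (fun j => ((x j : ℝ))) :=
      (castR x).symm
    have hkey : tR ⬝ᵥ (fun i => ((A.mulVec x i : ℤ) : ℝ)) =
        ∑ j, (tR ⬝ᵥ col j) * (x j : ℝ) := by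
      rw [hmv, dotProduct_mulVec]
      simp only [dotProduct, Matrix.vecMul, dotProduct, hcol,
        Matrix.transpose_apply]
    have hxR0 : ∀ j, (0:ℝ) ≤ (x j : ℝ) := fun j => by exact_mod_cast hx0 j
    have hsnn : ∀ j, 0 ≤ (tR ⬝ᵥ col j) * (x j : ℝ) := by
      intro j
      by_cases hj : col j = 0
      · simp [hj, dotProduct_zero]
      · have : δ / 2 < tR ⬝ᵥ col j := htU₀.1 j (by simp [hK, hj])
        exact mul_nonneg (by linarith) (hxR0 j)
    have htotal : ∑ j, (tR ⬝ᵥ col j) * (x j : ℝ) < β + 1 := by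
      rw [← hkey, heq]; exact htU₀.2
    -- each x j with nonzero column is bounded by N
    have hbound : ∀ j, col j ≠ 0 → x j ≤ (N : ℤ) := by
      intro j hj
      have hjK : j ∈ K := by simp [hK, hj]
      have h1 : (tR ⬝ᵥ col j) * (x j : ℝ) ≤ ∑ j', (tR ⬝ᵥ col j') * (x j' : ℝ) :=
        Finset.single_le_sum (fun j' _ => hsnn j') (Finset.mem_univ j)
      have h2 : δ / 2 < tR ⬝ᵥ col j := htU₀.1 j hjK
      have h3 : (δ / 2) * (x j : ℝ) ≤ (tR ⬝ᵥ col j) * (x j : ℝ) :=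
        mul_le_mul_of_nonneg_right (le_of_lt h2) (hxR0 j)
      have h4 : (δ / 2) * (x j : ℝ) < N * (δ / 2) := by linarith
      have h5 : (x j : ℝ) < N := by
        rw [mul_comm] at h4
        have := (mul_lt_mul_iff_left₀ (by linarith : (0:ℝ) < δ / 2)).1 h4
        exact this
      exact_mod_cast le_of_lt h5
    -- the truncated vector lies in the box
    set x' : Fin n → ℤ := fun j => if (∀ i, A i j = 0) then 0 else x j with hx'
    have hcolzero : ∀ j, (∀ i, A i j = 0) ↔ col j = 0 := by
      intro j
      constructor
      · intro h
        funext i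
        simp [hcol, hAr, Matrix.transpose_apply, Matrix.map_apply, h i]
      · intro h i
        have := congrFun h i
        simp only [hcol, hAr, Matrix.transpose_apply, Matrix.map_apply, Pi.zero_apply] at this
        exact_mod_cast this
    have hx'mem : x' ∈ Finset.Icc (0 : Fin n → ℤ) (fun _ => (N : ℤ)) := by
      rw [Finset.mem_Icc]
      constructor
      · intro j
        rw [hx']
        dsimp only
        split_ifs
        · exact le_refl 0
        · exact hx0 j
      · intro j
        rw [hx']
        dsimp only
        split_ifs with h
        · exact_mod_cast Nat.cast_nonneg N
        · exact hbound j (fun hc => h ((hcolzero j).2 hc))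
    have hAx' : A.mulVec x' = A.mulVec x := by
      funext i
      simp only [Matrix.mulVec, dotProduct]
      refine Finset.sum_congr rfl fun j _ => ?_
      rw [hx']
      dsimp only
      split_ifs with h
      · rw [h i]; ring
      · rfl
    have hyF : A.mulVec x ∈ F := by
      rw [hF, Finset.mem_image]
      exact ⟨x', hx'mem, hAx'⟩
    -- hyperplane avoidance gives A.mulVec x = b
    have hDv := Set.mem_iInter.1 htD ⟨A.mulVec x, hyF⟩
    by_cases hvb : (fun i => ((A.mulVec x i : ℤ) : ℝ)) - bR = 0
    · funext i
      have := congrFun hvb i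
      simp only [Pi.sub_apply, hbR, Pi.zero_apply, sub_eq_zero] at this
      exact_mod_cast this
    · exfalso
      rw [aux_hyp, if_neg hvb] at hDv
      apply hDv
      rw [dotProduct_sub, heq, sub_self]
end

section
/- Let A ∈ ℤ^{m×n}, let R = C(A) ∩ (−C(A)) be the lineality space of the cone C(A) with r = dim R, and assume C(A) ≠ R. Let H ⊆ ℝ^m be a linear subspace spanned by rational vectors with dim H ≥ m − r. Then there exists a nonzero vector ỹ ∈ ℚ^m with ỹ ∈ H ∩ C(A). -/
open Module Submodule

/-- Coordinatewise cast `ℚ^m → ℝ^m` as a `ℚ`-linear map. -/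
noncomputable def cQ (m : ℕ) : (Fin m → ℚ) →ₗ[ℚ] (Fin m → ℝ) :=
  LinearMap.compLeft (Algebra.linearMap ℚ ℝ) (Fin m)

lemma cQ_apply {m : ℕ} (q : Fin m → ℚ) (i : Fin m) : cQ m q i = (q i : ℝ) := rfl

lemma cQ_injective (m : ℕ) : Function.Injective (cQ m) := by
  intro a b h
  funext i
  have h2 := congrFun h i
  rw [cQ_apply, cQ_apply] at h2
  exact_mod_cast h2

/-- The real span of casts of rational vectors has dimension at most the ℚ-span. -/
lemma span_rank_le {m : ℕ} (t : Set (Fin m → ℚ)) :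
    finrank ℝ (span ℝ (cQ m '' t)) ≤ finrank ℚ (span ℚ t) := by
  classical
  set U := span ℚ t with hU
  let b := Module.finBasis ℚ U
  set d := finrank ℚ U with hd
  have hspan : span ℚ (Set.range (fun i => ((b i : U) : Fin m → ℚ))) = U := by
    have := congrArg (Submodule.map U.subtype) b.span_eq
    rwa [Submodule.map_span, Submodule.map_top, Submodule.range_subtype,
      ← Set.range_comp] at this
  have h1 : cQ m '' t ⊆
      (span ℝ (Set.range (fun i => cQ m ((b i : U) : Fin m → ℚ))) : Set (Fin m → ℝ)) := by
    rintro _ ⟨q, hq, rfl⟩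
    have hqU : q ∈ span ℚ (Set.range (fun i => ((b i : U) : Fin m → ℚ))) := by
      rw [hspan]; exact subset_span hq
    have hmap : cQ m q ∈ Submodule.map (cQ m)
        (span ℚ (Set.range (fun i => ((b i : U) : Fin m → ℚ)))) :=
      Submodule.mem_map_of_mem hqU
    rw [Submodule.map_span] at hmap
    have h2 : span ℚ (cQ m '' Set.range (fun i => ((b i : U) : Fin m → ℚ))) ≤
        (span ℝ (Set.range (fun i => cQ m ((b i : U) : Fin m → ℚ)))).restrictScalars ℚ := by
      rw [span_le]
      rintro _ ⟨_, ⟨i, rfl⟩, rfl⟩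
      exact subset_span ⟨i, rfl⟩
    exact h2 hmap
  calc finrank ℝ (span ℝ (cQ m '' t))
      ≤ finrank ℝ (span ℝ (Set.range (fun i => cQ m ((b i : U) : Fin m → ℚ)))) := by
        apply Submodule.finrank_mono
        rw [span_le]
        exact h1
    _ ≤ d := by
        have := finrank_range_le_card (R := ℝ) (fun i => cQ m ((b i : U) : Fin m → ℚ))
        simpa [Set.finrank] using this

/-- The Claim inside Lemma `LB`: if `H` is a rational subspace of dimension at
least `m - r` where `r = dim R`, `R = C(A) ∩ (-C(A))` being the lineality space
of the cone `C(A) ≠ R`, then `H ∩ C(A)` contains a nonzero rational vector. -/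
theorem stmt_10 (m n : ℕ) (A : Matrix (Fin m) (Fin n) ℤ)
    (C : Set (Fin m → ℝ))
    (hC : C = {v | ∃ x : Fin n → ℝ, 0 ≤ x ∧ v = (A.map (Int.cast : ℤ → ℝ)).mulVec x})
    (R : Submodule ℝ (Fin m → ℝ))
    (hR : (R : Set (Fin m → ℝ)) = {v | v ∈ C ∧ -v ∈ C})
    (hCR : C ≠ (R : Set (Fin m → ℝ)))
    (H : Submodule ℝ (Fin m → ℝ))
    (hHrat : ∃ s : Set (Fin m → ℝ),
      (∀ v ∈ s, ∀ i, ∃ qv : ℚ, v i = (qv : ℝ)) ∧ H = Submodule.span ℝ s)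
    (hdim : m - Module.finrank ℝ R ≤ Module.finrank ℝ H) :
    ∃ y : Fin m → ℝ, y ≠ 0 ∧ (∀ i, ∃ qv : ℚ, y i = (qv : ℝ)) ∧ y ∈ H ∧ y ∈ C := by
  classical
  obtain ⟨s, hsrat, hHeq⟩ := hHrat
  set M : Matrix (Fin m) (Fin n) ℝ := A.map (Int.cast : ℤ → ℝ) with hM
  set colR : Fin n → (Fin m → ℝ) := fun j i => M i j with hcolR
  set colQ : Fin n → (Fin m → ℚ) := fun j i => (A i j : ℚ) with hcolQ
  have hcQcol : ∀ j, cQ m (colQ j) = colR j := by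
    intro j; funext i
    simp [cQ_apply, hcolR, hcolQ, hM, Matrix.map_apply]
  -- membership facts about C
  have hmemC : ∀ j, colR j ∈ C := by
    intro j
    rw [hC]
    refine ⟨Pi.single j 1, ?_, ?_⟩
    · intro k; by_cases h : k = j <;> simp [Pi.single_apply, h]
    · funext i; simp [Matrix.mulVec_single, hcolR]
  have haddC : ∀ v w, v ∈ C → w ∈ C → v + w ∈ C := by
    intro v w hv hw
    rw [hC] at hv hw ⊢
    obtain ⟨x, hx0, rfl⟩ := hv
    obtain ⟨x', hx'0, rfl⟩ := hw
    exact ⟨x + x', fun k => add_nonneg (hx0 k) (hx'0 k), (Matrix.mulVec_add M x x').symm⟩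
  have hRsubC : (R : Set (Fin m → ℝ)) ⊆ C := by
    intro v hv; rw [hR] at hv; exact hv.1
  -- expressing elements of C as nonneg combinations of columns
  have hCsum : ∀ x : Fin n → ℝ, M.mulVec x = ∑ j, x j • colR j := by
    intro x
    funext i
    simp only [Matrix.mulVec, dotProduct, Finset.sum_apply]
    exact Finset.sum_congr rfl fun j _ => by simp [hcolR, mul_comm]
  -- a column not in R exists
  have hRC : ∃ j₀, colR j₀ ∉ R := by
    by_contra h
    push_neg at h
    apply hCR
    apply Set.Subset.antisymm _ hRsubC
    intro v hv
    rw [hC] at hv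
    obtain ⟨x, hx0, rfl⟩ := hv
    rw [hCsum]
    exact Submodule.sum_mem R fun j _ => Submodule.smul_mem R _ (h j)
  obtain ⟨j₀, hj₀⟩ := hRC
  -- the lineality lemma : R ⊆ span of the reversible columns
  set Sset : Set (Fin m → ℝ) := {v | ∃ j, v = colR j ∧ -colR j ∈ C} with hSset
  have hlin : (R : Set (Fin m → ℝ)) ⊆ (span ℝ Sset : Set (Fin m → ℝ)) := by
    intro v hv
    rw [hR] at hv
    obtain ⟨hv1, hv2⟩ := hv
    rw [hC] at hv1 hv2
    obtain ⟨x, hx0, hvx⟩ := hv1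
    obtain ⟨x', hx'0, hvx'⟩ := hv2
    have hv' : v = ∑ j, x j • colR j := by rw [hvx, hCsum]
    rw [hv']
    apply Submodule.sum_mem
    intro j _
    by_cases hxj : x j = 0
    · simp [hxj]
    · have hxj' : 0 < x j := lt_of_le_of_ne (hx0 j) (Ne.symm hxj)
      have hnegcol : -colR j ∈ C := by
        rw [hC]
        refine ⟨(x j)⁻¹ • (x' + x - Pi.single j (x j)), ?_, ?_⟩
        · intro k
          have hx'k : (0:ℝ) ≤ x' k := by simpa using hx'0 k
          have hxk : (0:ℝ) ≤ x k := by simpa using hx0 k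
          have h1 : 0 ≤ x' k + x k - (Pi.single j (x j) : Fin n → ℝ) k := by
            by_cases h : k = j
            · subst h; simp [Pi.single_apply]; linarith
            · simp [Pi.single_apply, h]; linarith
          have : (0:ℝ) ≤ (x j)⁻¹ := le_of_lt (inv_pos.mpr hxj')
          simpa using mul_nonneg this h1
        · have hMx : M.mulVec (x' + x - Pi.single j (x j)) = -(x j • colR j) := by
            rw [Matrix.mulVec_sub, Matrix.mulVec_add, ← hvx, ← hvx',
              Matrix.mulVec_single]
            funext i
            simp [hcolR, mul_comm]
          rw [Matrix.mulVec_smul, hMx, smul_neg, smul_smul,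
            inv_mul_cancel₀ (ne_of_gt hxj'), one_smul]
      exact Submodule.smul_mem _ _ (subset_span ⟨j, rfl, hnegcol⟩)
  -- rational preimages
  set tH : Set (Fin m → ℚ) := cQ m ⁻¹' s with htH
  set tR : Set (Fin m → ℚ) := {q | ∃ j, q = colQ j ∧ -colR j ∈ C} with htR
  have himH : cQ m '' tH = s := by
    apply Set.Subset.antisymm
    · rintro _ ⟨q, hq, rfl⟩; exact hq
    · intro v hv
      refine ⟨fun i => Classical.choose (hsrat v hv i), ?_, ?_⟩
      · show cQ m _ ∈ s
        have : cQ m (fun i => Classical.choose (hsrat v hv i)) = v := by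
          funext i
          rw [cQ_apply]
          exact (Classical.choose_spec (hsrat v hv i)).symm
        rwa [this]
      · funext i
        rw [cQ_apply]
        exact (Classical.choose_spec (hsrat v hv i)).symm
  have himR : cQ m '' tR = Sset := by
    apply Set.Subset.antisymm
    · rintro _ ⟨q, ⟨j, rfl, hj⟩, rfl⟩
      exact ⟨j, (hcQcol j).symm ▸ rfl, hj⟩
    · rintro _ ⟨j, rfl, hj⟩
      exact ⟨colQ j, ⟨j, rfl, hj⟩, hcQcol j⟩
  set HQ : Submodule ℚ (Fin m → ℚ) := span ℚ tH with hHQ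
  set RQ : Submodule ℚ (Fin m → ℚ) := span ℚ tR with hRQ
  -- dimension bounds
  have hdH : finrank ℝ H ≤ finrank ℚ HQ := by
    rw [hHeq, ← himH]; exact span_rank_le tH
  have hdR : finrank ℝ R ≤ finrank ℚ RQ := by
    have h1 : R ≤ span ℝ (cQ m '' tR) := by rw [himR]; exact fun v hv => hlin hv
    exact le_trans (Submodule.finrank_mono h1) (span_rank_le tR)
  -- cast inclusions
  have hHQH : ∀ q ∈ HQ, cQ m q ∈ H := by
    intro q hq
    have : Submodule.map (cQ m) HQ ≤ H.restrictScalars ℚ := by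
      rw [hHQ, Submodule.map_span, span_le, himH, hHeq]
      exact fun v hv => subset_span hv
    exact this (Submodule.mem_map_of_mem hq)
  have hRQR : ∀ q ∈ RQ, cQ m q ∈ R := by
    intro q hq
    have : Submodule.map (cQ m) RQ ≤ R.restrictScalars ℚ := by
      rw [hRQ, Submodule.map_span, span_le, himR]
      rintro _ ⟨j, rfl, hj⟩
      show colR j ∈ R
      rw [← SetLike.mem_coe, hR]
      exact ⟨hmemC j, hj⟩
    exact this (Submodule.mem_map_of_mem hq)
  -- key dimension count
  have hrle : finrank ℝ R ≤ m := by
    have := Submodule.finrank_le R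
    rwa [Module.finrank_fin_fun] at this
  have hkey : m ≤ finrank ℚ HQ + finrank ℚ RQ := by omega
  by_cases h0 : HQ ⊓ RQ = ⊥
  · -- direct sum case: decompose a column not in R
    have hsup : HQ ⊔ RQ = ⊤ := by
      apply Submodule.eq_top_of_finrank_eq
      have h1 := Submodule.finrank_sup_add_finrank_inf_eq HQ RQ
      rw [h0, finrank_bot, Nat.add_zero] at h1
      have h2 : finrank ℚ (HQ ⊔ RQ : Submodule ℚ (Fin m → ℚ)) ≤ m := by
        have := Submodule.finrank_le (HQ ⊔ RQ)
        rwa [Module.finrank_fin_fun] at this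
      rw [Module.finrank_fin_fun]
      omega
    have ha : colQ j₀ ∈ HQ ⊔ RQ := by rw [hsup]; trivial
    obtain ⟨h, hh, ρ, hρ, hhρ⟩ := Submodule.mem_sup.mp ha
    refine ⟨cQ m h, ?_, fun i => ⟨h i, rfl⟩, hHQH h hh, ?_⟩
    · intro hzero
      have h0' : h = 0 := cQ_injective m (by rw [hzero, map_zero])
      rw [h0', zero_add] at hhρ
      rw [hhρ] at hρ
      have hmem := hRQR _ hρ
      rw [hcQcol] at hmem
      exact hj₀ hmem
    · have hcast : cQ m h = colR j₀ + -(cQ m ρ) := by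
        have : cQ m h + cQ m ρ = colR j₀ := by
          rw [← map_add, hhρ, hcQcol]
        linear_combination (norm := module) this
      rw [hcast]
      apply haddC _ _ (hmemC j₀)
      apply hRsubC
      exact Submodule.neg_mem R (hRQR ρ hρ)
  · -- intersecting case: a nonzero rational vector in H ∩ R
    obtain ⟨q, hq, hq0⟩ := (Submodule.ne_bot_iff _).mp h0
    refine ⟨cQ m q, ?_, fun i => ⟨q i, rfl⟩, hHQH q hq.1, hRsubC (hRQR q hq.2)⟩
    intro hzero
    exact hq0 (cQ_injective m (by rw [hzero, map_zero]))
end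

section
/- Let A ∈ ℤ^{m×n} and b ∈ ℤ^m. Let R = C(A) ∩ (−C(A)) be the lineality space of C(A), r = dim R, and assume C(A) ≠ R. Let T ∈ ℚ^{k×m} with k ≤ r. If the system (F) has a solution x* (i.e. x* ∈ ℤ^n, x* ≥ 0, Ax* = b), then there exists x_T ∈ ℤ^n with x_T ≥ 0, (TA)x_T = Tb and Ax_T ≠ b; in particular T is not a strong aggregation matrix for (F). -/
open Matrix Module


lemma aux_left_inv {p q : Type*} [Fintype p] [Fintype q] [DecidableEq p] [DecidableEq q]
    (M : Matrix p q ℚ) (h : LinearMap.ker M.mulVecLin = ⊥) :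
    ∃ B : Matrix q p ℚ, B * M = 1 := by
  obtain ⟨g, hg⟩ := LinearMap.exists_leftInverse_of_injective M.mulVecLin h
  refine ⟨LinearMap.toMatrix' g, ?_⟩
  have h1 : M.mulVecLin = Matrix.toLin' M := rfl
  calc LinearMap.toMatrix' g * M
      = LinearMap.toMatrix' g * LinearMap.toMatrix' (Matrix.toLin' M) := by
        rw [LinearMap.toMatrix'_toLin']
    _ = LinearMap.toMatrix' (g ∘ₗ Matrix.toLin' M) := (LinearMap.toMatrix'_comp _ _).symm
    _ = 1 := by rw [← h1, hg]; exact LinearMap.toMatrix'_id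

lemma aux_ker_cast {p q : Type*} [Fintype p] [Fintype q] [DecidableEq p] [DecidableEq q]
    (M : Matrix p q ℚ) (h : LinearMap.ker M.mulVecLin = ⊥) :
    LinearMap.ker (M.map (Rat.cast : ℚ → ℝ)).mulVecLin = ⊥ := by
  obtain ⟨B, hB⟩ := aux_left_inv M h
  rw [LinearMap.ker_eq_bot']
  intro x hx
  have hmap : (M.map (Rat.cast : ℚ → ℝ)) = M.map (Rat.castHom ℝ) := rfl
  have h1 : (B.map (Rat.castHom ℝ)) * (M.map (Rat.castHom ℝ)) = 1 := by
    rw [← Matrix.map_mul, hB, Matrix.map_one _ (map_zero _) (map_one _)]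
  have h2 : (B.map (Rat.castHom ℝ)) *ᵥ ((M.map (Rat.castHom ℝ)) *ᵥ x) = x := by
    rw [Matrix.mulVec_mulVec, h1, Matrix.one_mulVec]
  have hx' : (M.map (Rat.castHom ℝ)) *ᵥ x = 0 := by
    rw [← hmap]; exact hx
  rw [hx', Matrix.mulVec_zero] at h2
  exact h2.symm

lemma aux_li_cast {ι ρ : Type*} [Fintype ι] [Fintype ρ] [DecidableEq ι] [DecidableEq ρ]
    (v : ι → (ρ → ℚ)) (h : LinearIndependent ℚ v) :
    LinearIndependent ℝ (fun i => (fun x => ((v i x : ℚ) : ℝ))) := by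
  classical
  rw [Fintype.linearIndependent_iff] at h ⊢
  have hker : LinearMap.ker (Matrix.of fun x i => v i x : Matrix ρ ι ℚ).mulVecLin = ⊥ := by
    rw [LinearMap.ker_eq_bot']
    intro c hc
    have hc' : ∀ x, ∑ i, c i * v i x = 0 := by
      intro x
      have := congrFun hc x
      simpa [Matrix.mulVecLin, Matrix.mulVec, dotProduct, mul_comm] using this
    have := h c (by funext x; simpa using hc' x)
    funext i; exact this i
  have hkerR := aux_ker_cast _ hker
  rw [LinearMap.ker_eq_bot'] at hkerR
  intro g hg i
  have hg' : ((Matrix.of fun x i => v i x : Matrix ρ ι ℚ).map (Rat.cast : ℚ → ℝ)).mulVecLin g = 0 := by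
    funext x
    have := congrFun hg x
    simpa [Matrix.mulVecLin, Matrix.mulVec, dotProduct, Matrix.map, mul_comm] using this
  exact congrFun (hkerR g hg') i

lemma aux_kernel_rat {n : ℕ} {ρ : Type*} [Fintype ρ] [DecidableEq ρ]
    (M : Matrix ρ (Fin n) ℚ)
    (x₀ : Fin n → ℝ) (hx₀ : (M.map (Rat.cast : ℚ → ℝ)) *ᵥ x₀ = 0)
    (U : Set (Fin n → ℝ)) (hU : IsOpen U) (hxU : x₀ ∈ U) :
    ∃ y : Fin n → ℚ, M *ᵥ y = 0 ∧ (fun j => ((y j : ℝ))) ∈ U := by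
  classical
  set Mr := M.map (Rat.cast : ℚ → ℝ) with hMr
  set Kq := LinearMap.ker M.mulVecLin with hKq
  set Kr := LinearMap.ker Mr.mulVecLin with hKr
  set d := finrank ℚ Kq with hd
  let bq : Basis (Fin d) ℚ Kq := finBasis ℚ Kq
  set w : Fin d → (Fin n → ℚ) := fun i => (bq i : Fin n → ℚ) with hw
  have hwli : LinearIndependent ℚ w := bq.linearIndependent.map' Kq.subtype Kq.ker_subtype
  set wR : Fin d → (Fin n → ℝ) := fun i j => ((w i j : ℚ) : ℝ) with hwR
  have hwRli : LinearIndependent ℝ wR := aux_li_cast w hwli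
  have hcast : ∀ z : Fin n → ℚ, M *ᵥ z = 0 → Mr *ᵥ (fun j => ((z j : ℚ) : ℝ)) = 0 := by
    intro z hz
    funext x
    have h1 : ((Rat.castHom ℝ) ((M *ᵥ z) x)) = (M.map (Rat.castHom ℝ) *ᵥ ((Rat.castHom ℝ) ∘ z)) x :=
      RingHom.map_mulVec _ _ _ _
    have h2 : ((Rat.castHom ℝ) ((M *ᵥ z) x)) = 0 := by rw [hz]; simp
    rw [h2] at h1
    exact (h1.symm.trans rfl)
  have hwker : ∀ i, wR i ∈ Kr := by
    intro i
    have hmem : w i ∈ Kq := SetLike.coe_mem (bq i)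
    rw [hKq, LinearMap.mem_ker, Matrix.mulVecLin_apply] at hmem
    rw [hKr, LinearMap.mem_ker, Matrix.mulVecLin_apply]
    exact hcast _ hmem
  have hspan_le : Submodule.span ℝ (Set.range wR) ≤ Kr :=
    Submodule.span_le.mpr (Set.range_subset_iff.mpr hwker)
  -- rank inequality: finrank range over ℚ ≤ finrank range over ℝ
  have hrle : finrank ℚ (LinearMap.range M.mulVecLin) ≤ finrank ℝ (LinearMap.range Mr.mulVecLin) := by
    obtain ⟨s, hs_sub, hs_span, hs_li⟩ := exists_linearIndependent ℚ (Set.range Mᵀ)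
    have hsfin : s.Finite := Set.Finite.subset (Set.finite_range _) hs_sub
    have : Fintype s := hsfin.fintype
    have hcard : finrank ℚ (LinearMap.range M.mulVecLin) = s.toFinset.card := by
      rw [Matrix.range_mulVecLin, Matrix.col, ← hs_span, finrank_span_set_eq_card hs_li]
    set vs : s → (ρ → ℝ) := fun c => fun x => (((c : ρ → ℚ) x : ℚ) : ℝ) with hvs
    have hvsli : LinearIndependent ℝ vs := aux_li_cast _ hs_li
    have hvsmem : ∀ c : s, vs c ∈ LinearMap.range Mr.mulVecLin := by
      intro c
      obtain ⟨j, hj⟩ := hs_sub c.2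
      rw [Matrix.range_mulVecLin]
      apply Submodule.subset_span
      refine ⟨j, ?_⟩
      funext x
      rw [hvs]
      simp only [hMr, Matrix.col, Matrix.transpose_apply, Matrix.map_apply, ← hj]
    set u : s → LinearMap.range Mr.mulVecLin := fun c => ⟨vs c, hvsmem c⟩ with hu
    have huli : LinearIndependent ℝ u := by
      apply LinearIndependent.of_comp (LinearMap.range Mr.mulVecLin).subtype
      exact hvsli
    have := huli.fintype_card_le_finrank
    rw [hcard, Set.toFinset_card]
    exact this
  have h1 := LinearMap.finrank_range_add_finrank_ker M.mulVecLin
  have h2 := LinearMap.finrank_range_add_finrank_ker Mr.mulVecLin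
  rw [Module.finrank_pi] at h1 h2
  rw [← hKq] at h1
  rw [← hKr] at h2
  have hrank : finrank ℝ Kr ≤ d := by omega
  have hspan_eq : Submodule.span ℝ (Set.range wR) = Kr := by
    apply Submodule.eq_of_le_of_finrank_le hspan_le
    rw [finrank_span_eq_card hwRli]
    simpa using hrank
  -- x₀ in Kr, decompose
  have hx₀K : x₀ ∈ Kr := by rw [hKr, LinearMap.mem_ker, Matrix.mulVecLin_apply]; exact hx₀
  rw [← hspan_eq] at hx₀K
  obtain ⟨c, hc⟩ := Submodule.mem_span_range_iff_exists_fun ℝ |>.mp hx₀K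
  -- continuity
  set φ : (Fin d → ℝ) → (Fin n → ℝ) := fun c => ∑ i, c i • wR i with hφ
  have hφc : Continuous φ := by
    apply continuous_finset_sum
    intro i _
    exact (continuous_apply i).smul continuous_const
  have hcV : c ∈ φ ⁻¹' U := by
    simp only [Set.mem_preimage, hφ]
    rw [hc]; exact hxU
  obtain ⟨ε, hε, hball⟩ := Metric.isOpen_iff.mp (hU.preimage hφc) c hcV
  have hq : ∀ i : Fin d, ∃ q : ℚ, |c i - (q : ℝ)| < ε := fun i => exists_rat_near (c i) hε
  choose q hq using hq
  have hqball : (fun i => ((q i : ℚ) : ℝ)) ∈ Metric.ball c ε := by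
    rw [Metric.mem_ball, dist_pi_lt_iff hε]
    intro i
    rw [Real.dist_eq, abs_sub_comm]
    exact hq i
  have hφq : φ (fun i => ((q i : ℚ) : ℝ)) ∈ U := hball hqball
  -- build rational y
  refine ⟨fun j => ∑ i, q i * w i j, ?_, ?_⟩
  · have hy : (fun j => ∑ i, q i * w i j) = (∑ i, q i • w i : Fin n → ℚ) := by
      funext j; simp [Finset.sum_apply]
    rw [hy]
    have : (∑ i, q i • w i : Fin n → ℚ) ∈ Kq :=
      Submodule.sum_mem _ (fun i _ => Kq.smul_mem _ (SetLike.coe_mem (bq i)))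
    rw [hKq, LinearMap.mem_ker, Matrix.mulVecLin_apply] at this
    exact this
  · have : (fun j => ((((fun j => ∑ i, q i * w i j) : Fin n → ℚ) j : ℚ) : ℝ)) =
        φ (fun i => ((q i : ℚ) : ℝ)) := by
      funext j
      rw [hφ]
      push_cast
      simp [Finset.sum_apply, hwR]
    rw [this]
    exact hφq


/-- Lemma `LB`: if `k ≤ r = dim(C(A) ∩ (-C(A)))`, `C(A) ≠ R`, and `(F)` has a
solution `x*`, then for any `T ∈ ℚ^{k×m}` there is a solution `x_T` of the
aggregated system `(F_T)` which is not a solution of `(F)`; in particular `T`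
is not a strong aggregation matrix. -/
theorem stmt_11 (m n k : ℕ) (A : Matrix (Fin m) (Fin n) ℤ) (b : Fin m → ℤ)
    (C : Set (Fin m → ℝ))
    (hC : C = {v | ∃ x : Fin n → ℝ, 0 ≤ x ∧ v = (A.map (Int.cast : ℤ → ℝ)).mulVec x})
    (R : Submodule ℝ (Fin m → ℝ))
    (hR : (R : Set (Fin m → ℝ)) = {v | v ∈ C ∧ -v ∈ C})
    (hCR : C ≠ (R : Set (Fin m → ℝ)))
    (hk : k ≤ Module.finrank ℝ R)
    (T : Matrix (Fin k) (Fin m) ℚ)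
    (xstar : Fin n → ℤ) (hxstar : 0 ≤ xstar ∧ A.mulVec xstar = b) :
    ∃ xT : Fin n → ℤ, 0 ≤ xT ∧
      (T * A.map (Int.cast : ℤ → ℚ)).mulVec (fun j => (xT j : ℚ)) =
        T.mulVec (fun i => (b i : ℚ)) ∧
      A.mulVec xT ≠ b := by
  classical
  set Ar := A.map (Int.cast : ℤ → ℝ) with hAr
  set Aq := A.map (Int.cast : ℤ → ℚ) with hAq
  set Tr := T.map (Rat.cast : ℚ → ℝ) with hTr
  -- C basic facts
  have hRC : (R : Set (Fin m → ℝ)) ⊆ C := by rw [hR]; exact fun v hv => hv.1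
  have hCadd : ∀ a c : Fin m → ℝ, a ∈ C → c ∈ C → a + c ∈ C := by
    intro a c ha hc
    rw [hC] at ha hc ⊢
    obtain ⟨x, hx0, hx⟩ := ha
    obtain ⟨y, hy0, hy⟩ := hc
    exact ⟨x + y, add_nonneg hx0 hy0, by rw [hx, hy, Matrix.mulVec_add]⟩
  -- Step 1: find v ∈ C, v ≠ 0, Tr *ᵥ v = 0
  have hstep1 : ∃ v : Fin m → ℝ, v ∈ C ∧ v ≠ 0 ∧ Tr *ᵥ v = 0 := by
    set f : R →ₗ[ℝ] (Fin k → ℝ) := Tr.mulVecLin ∘ₗ R.subtype with hf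
    by_cases hker : LinearMap.ker f = ⊥
    · -- injective: range = ⊤
      have hinj : Function.Injective f := LinearMap.ker_eq_bot.mp hker
      have hr1 : finrank ℝ (LinearMap.range f) = finrank ℝ R := LinearMap.finrank_range_of_inj hinj
      have hr2 : finrank ℝ (LinearMap.range f) ≤ k := by
        have := (LinearMap.range f).finrank_le
        rwa [Module.finrank_pi, Fintype.card_fin] at this
      have htop : LinearMap.range f = ⊤ := by
        apply Submodule.eq_top_of_finrank_eq
        rw [Module.finrank_pi, Fintype.card_fin]
        omega
      obtain ⟨w, hwC, hwR⟩ : ∃ w, w ∈ C ∧ w ∉ (R : Set (Fin m → ℝ)) := by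
        by_contra hcon
        push_neg at hcon
        exact hCR (Set.Subset.antisymm (fun v hv => hcon v hv) hRC)
      obtain ⟨u, hu⟩ : ∃ u : R, f u = Tr *ᵥ w := by
        have : Tr *ᵥ w ∈ LinearMap.range f := htop ▸ Submodule.mem_top
        exact this
      refine ⟨w + (-(u : Fin m → ℝ)), ?_, ?_, ?_⟩
      · apply hCadd _ _ hwC
        have : (u : Fin m → ℝ) ∈ (R : Set (Fin m → ℝ)) := u.2
        rw [hR] at this
        exact this.2
      · intro h0
        apply hwR
        have : w = (u : Fin m → ℝ) := by
          have := congrArg (· + (u : Fin m → ℝ)) h0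
          simpa using this
        rw [this]
        exact u.2
      · have hfu : Tr *ᵥ (u : Fin m → ℝ) = Tr *ᵥ w := hu
        rw [Matrix.mulVec_add, Matrix.mulVec_neg, hfu]
        simp
    · obtain ⟨u, huK, hu0⟩ := Submodule.exists_mem_ne_zero_of_ne_bot hker
      refine ⟨(u : Fin m → ℝ), hRC u.2, ?_, huK⟩
      simpa using hu0
  obtain ⟨v, hvC, hv0, hvT⟩ := hstep1
  rw [hC] at hvC
  obtain ⟨x₀, hx₀0, hx₀⟩ := hvC
  -- Step 2: rational approximation
  set M : Matrix (Fin k ⊕ Fin n) (Fin n) ℚ := Matrix.of (Sum.elim (fun i => (T * Aq) i)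
      (fun j => fun j' => if x₀ j = 0 ∧ j' = j then (1 : ℚ) else 0)) with hM
  have hAmap : Ar = Aq.map (Rat.cast : ℚ → ℝ) := by
    rw [hAr, hAq, Matrix.map_map]
    congr 1
  have hTAmap : (T * Aq).map (Rat.cast : ℚ → ℝ) = Tr * Ar := by
    rw [hAmap, hTr]
    exact Matrix.map_mul (f := Rat.castHom ℝ)
  have hMx₀ : (M.map (Rat.cast : ℚ → ℝ)) *ᵥ x₀ = 0 := by
    funext r
    cases r with
    | inl i =>
      have hrow : ((M.map (Rat.cast : ℚ → ℝ)) *ᵥ x₀) (Sum.inl i) = ((Tr * Ar) *ᵥ x₀) i := by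
        simp only [Matrix.mulVec, ← hTAmap]
        congr 1
      rw [hrow, ← Matrix.mulVec_mulVec, ← hx₀, hvT]
      simp
    | inr j =>
      have hrow : ((M.map (Rat.cast : ℚ → ℝ)) *ᵥ x₀) (Sum.inr j) =
          ∑ j', (if x₀ j = 0 ∧ j' = j then (1:ℝ) else 0) * x₀ j' := by
        simp only [Matrix.mulVec, dotProduct, Matrix.map_apply, hM, Matrix.of_apply,
          Sum.elim_inr]
        congr 1
        funext j'
        split <;> simp
      rw [hrow]
      by_cases hj : x₀ j = 0
      · simp [hj]
      · simp [hj]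
  set U : Set (Fin n → ℝ) := {y | Ar *ᵥ y ≠ 0 ∧ ∀ j, x₀ j ≠ 0 → 0 < y j} with hU
  have hUopen : IsOpen U := by
    have h1 : IsOpen {y : Fin n → ℝ | Ar *ᵥ y ≠ 0} := by
      have hcont : Continuous (fun y : Fin n → ℝ => Ar *ᵥ y) := by
        have := LinearMap.continuous_of_finiteDimensional (Ar.mulVecLin)
        exact this
      have : {y : Fin n → ℝ | Ar *ᵥ y ≠ 0} = (fun y : Fin n → ℝ => Ar *ᵥ y) ⁻¹' ({0}ᶜ) := rfl
      rw [this]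
      exact (isOpen_compl_iff.mpr isClosed_singleton).preimage hcont
    have h2 : IsOpen {y : Fin n → ℝ | ∀ j, x₀ j ≠ 0 → 0 < y j} := by
      have heq : {y : Fin n → ℝ | ∀ j, x₀ j ≠ 0 → 0 < y j} =
          ⋂ j, {y : Fin n → ℝ | x₀ j ≠ 0 → 0 < y j} := by
        ext y; simp
      rw [heq]
      apply isOpen_iInter_of_finite
      intro j
      by_cases hj : x₀ j = 0
      · simp [hj]
      · have heq2 : {y : Fin n → ℝ | x₀ j ≠ 0 → 0 < y j} = {y : Fin n → ℝ | 0 < y j} := by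
          ext y; simp [hj]
        rw [heq2]
        exact isOpen_lt continuous_const (continuous_apply j)
    have : U = {y : Fin n → ℝ | Ar *ᵥ y ≠ 0} ∩ {y : Fin n → ℝ | ∀ j, x₀ j ≠ 0 → 0 < y j} := rfl
    rw [this]
    exact h1.inter h2
  have hx₀U : x₀ ∈ U := by
    constructor
    · rw [← hx₀]; exact hv0
    · intro j hj
      exact lt_of_le_of_ne (hx₀0 j) (Ne.symm hj)
  obtain ⟨y, hyker, hyU⟩ := aux_kernel_rat M x₀ hMx₀ U hUopen hx₀U
  obtain ⟨hyA, hypos⟩ := hyU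
  -- facts about y
  have hTAy : (T * Aq) *ᵥ y = 0 := by
    funext i
    have := congrFun hyker (Sum.inl i)
    simpa [Matrix.mulVec, hM] using this
  have hyzero : ∀ j, x₀ j = 0 → y j = 0 := by
    intro j hj
    have := congrFun hyker (Sum.inr j)
    simp only [Matrix.mulVec, dotProduct, hM, Matrix.of_apply, Sum.elim_inr,
      Pi.zero_apply, hj, true_and] at this
    rwa [Finset.sum_eq_single j (fun j' _ hj' => by simp [hj']) (by simp),
      if_pos rfl, one_mul] at this
  have hy0 : ∀ j, 0 ≤ y j := by
    intro j
    by_cases hj : x₀ j = 0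
    · rw [hyzero j hj]
    · have : (0 : ℝ) < ((y j : ℚ) : ℝ) := hypos j hj
      exact_mod_cast this.le
  have hAqy : Aq *ᵥ y ≠ 0 := by
    intro h0
    apply hyA
    have : Ar *ᵥ (fun j => ((y j : ℚ) : ℝ)) = fun i => (((Aq *ᵥ y) i : ℚ) : ℝ) := by
      funext i
      rw [hAmap]
      exact (RingHom.map_mulVec (Rat.castHom ℝ) Aq y i).symm
    rw [this, h0]
    funext i
    simp
  -- scaling to integers
  set D : ℤ := ∏ j, ((y j).den : ℤ) with hD
  have hDpos : 0 < D := Finset.prod_pos (fun j _ => by exact_mod_cast (y j).pos)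
  set xd : Fin n → ℤ := fun j => (y j).num * (D / ((y j).den : ℤ)) with hxd
  have hxdcast : ∀ j, ((xd j : ℤ) : ℚ) = y j * (D : ℚ) := by
    intro j
    have hdvd : ((y j).den : ℤ) ∣ D := Finset.dvd_prod_of_mem _ (Finset.mem_univ j)
    obtain ⟨t, ht⟩ := hdvd
    have hdnz : ((y j).den : ℤ) ≠ 0 := by exact_mod_cast (y j).den_nz
    have hdnzq : (((y j).den : ℤ) : ℚ) ≠ 0 := by exact_mod_cast (y j).den_nz
    have hnum : (((y j).num : ℤ) : ℚ) = y j * (((y j).den : ℤ) : ℚ) := by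
      have h := Rat.num_div_den (y j)
      rw [div_eq_iff (by exact_mod_cast (y j).den_nz : ((y j).den : ℚ) ≠ 0)] at h
      push_cast
      exact_mod_cast h
    rw [hxd]
    simp only [ht, Int.mul_ediv_cancel_left _ hdnz]
    push_cast
    push_cast at hnum
    rw [← mul_assoc, hnum]
  have hxd0 : ∀ j, 0 ≤ xd j := by
    intro j
    have : (0 : ℚ) ≤ ((xd j : ℤ) : ℚ) := by
      rw [hxdcast j]
      exact mul_nonneg (hy0 j) (by exact_mod_cast hDpos.le)
    exact_mod_cast this
  refine ⟨xstar + xd, ?_, ?_, ?_⟩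
  · intro j
    exact add_nonneg (hxstar.1 j) (hxd0 j)
  · have hsplit : (fun j => (((xstar + xd) j : ℤ) : ℚ)) =
        (fun j => ((xstar j : ℤ) : ℚ)) + (D : ℚ) • y := by
      funext j
      simp only [Pi.add_apply, Pi.smul_apply, smul_eq_mul, Int.cast_add, hxdcast j]
      ring
    rw [hsplit, Matrix.mulVec_add, Matrix.mulVec_smul, hTAy, smul_zero, add_zero,
      ← Matrix.mulVec_mulVec]
    have : Aq *ᵥ (fun j => ((xstar j : ℤ) : ℚ)) = fun i => (((A *ᵥ xstar) i : ℤ) : ℚ) := by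
      funext i
      rw [hAq]
      exact (RingHom.map_mulVec (Int.castRingHom ℚ) A xstar i).symm
    rw [this, hxstar.2]
  · intro heq
    have hAxd : A *ᵥ xd = 0 := by
      have h1 : A *ᵥ (xstar + xd) = A *ᵥ xstar + A *ᵥ xd := Matrix.mulVec_add A xstar xd
      rw [heq, hxstar.2] at h1
      have := congrArg (fun z => z - b) h1
      simpa using this.symm
    apply hAqy
    have hcasted : Aq *ᵥ (fun j => ((xd j : ℤ) : ℚ)) = 0 := by
      have : Aq *ᵥ (fun j => ((xd j : ℤ) : ℚ)) = fun i => (((A *ᵥ xd) i : ℤ) : ℚ) := by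
        funext i
        rw [hAq]
        exact (RingHom.map_mulVec (Int.castRingHom ℚ) A xd i).symm
      rw [this, hAxd]
      funext i
      simp
    have hxdy : (fun j => ((xd j : ℤ) : ℚ)) = (D : ℚ) • y := by
      funext j
      rw [hxdcast j, Pi.smul_apply, smul_eq_mul, mul_comm]
    rw [hxdy, Matrix.mulVec_smul] at hcasted
    have hDq : (D : ℚ) ≠ 0 := by exact_mod_cast hDpos.ne'
    exact (smul_eq_zero.mp hcasted).resolve_left hDq
end

section
/- Let A ∈ ℤ^{m×n} with rank(A) = m, let b ∈ ℤ^m, and let r be the dimension of the lineality space R = C(A) ∩ (−C(A)) of the cone C(A), with r < m. Assume the system (F) has a solution, i.e. there exists x* ∈ ℤ^n with x* ≥ 0 and Ax* = b. Then no matrix T ∈ ℚ^{k×m} with k ≤ r is a strong aggregation matrix for (F); hence a strong aggregation matrix of size r + 1 has minimum size. -/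
open Matrix


lemma indep_cast {ι κ : Type*} [Fintype ι] [Fintype κ] [DecidableEq ι] (v : ι → (κ → ℚ))
    (hv : LinearIndependent ℚ v) :
    LinearIndependent ℝ (fun i => (fun t => ((v i t : ℚ) : ℝ))) := by
  classical
  set V : Matrix ι κ ℚ := Matrix.of v with hV
  set G : Matrix ι ι ℚ := V * Vᵀ with hG
  have hGdet : G.det ≠ 0 := by
    intro h0
    obtain ⟨c, hc0, hc⟩ := (Matrix.exists_mulVec_eq_zero_iff).2 h0
    have hw : Vᵀ.mulVec c = 0 := by
      have h1 : c ⬝ᵥ G.mulVec c = 0 := by rw [hc]; simp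
      have h2 : c ⬝ᵥ G.mulVec c = (Vᵀ.mulVec c) ⬝ᵥ (Vᵀ.mulVec c) := by
        rw [hG, ← Matrix.mulVec_mulVec, Matrix.dotProduct_mulVec c V, ]
        congr 1
        ext t
        simp [Matrix.vecMul, Matrix.mulVec, dotProduct, mul_comm]
      rw [h2] at h1
      have h3 : ∀ t, (Vᵀ.mulVec c) t = 0 := by
        intro t
        have hnn : ∀ s ∈ Finset.univ, (0:ℚ) ≤ (Vᵀ.mulVec c) s * (Vᵀ.mulVec c) s :=
          fun s _ => mul_self_nonneg _
        have := (Finset.sum_eq_zero_iff_of_nonneg hnn).1 h1 t (Finset.mem_univ t)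
        exact mul_self_eq_zero.1 this
      exact funext h3
    apply hc0
    have := Fintype.linearIndependent_iff.1 hv c ?_
    · exact funext this
    · ext t
      have := congrFun hw t
      simpa [Matrix.mulVec, dotProduct, V, Finset.sum_apply, mul_comm] using this
  -- now over ℝ
  rw [Fintype.linearIndependent_iff]
  intro c hc
  set V' : Matrix ι κ ℝ := V.map (Rat.cast) with hV'
  have hG'det : (V' * V'ᵀ).det ≠ 0 := by
    have : (V' * V'ᵀ) = G.map (Rat.cast) := by
      rw [hG, hV']
      ext i j
      simp [Matrix.mul_apply]
    rw [this]
    have hdm : (G.map Rat.cast).det = ((G.det : ℚ) : ℝ) := by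
      rw [show G.map (Rat.cast : ℚ → ℝ) = (Rat.castHom ℝ).mapMatrix G from rfl,
        ← RingHom.map_det]
      rfl
    rw [hdm]
    simpa using hGdet
  have hw' : V'ᵀ.mulVec c = 0 := by
    ext t
    have := congrFun hc t
    simpa [Matrix.mulVec, dotProduct, V', V, Finset.sum_apply, mul_comm] using this
  have hker : (V' * V'ᵀ).mulVec c = 0 := by
    rw [← Matrix.mulVec_mulVec, hw', Matrix.mulVec_zero]
  by_contra hcc
  push_neg at hcc
  obtain ⟨i, hi⟩ := hcc
  exact hG'det ((Matrix.exists_mulVec_eq_zero_iff).1 ⟨c, fun h => hi (congrFun h i), hker⟩)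

lemma ker_span {n : ℕ} {ι : Type*} [Fintype ι]
    (g : (Fin n → ℚ) →ₗ[ℚ] (ι → ℚ)) (gR : (Fin n → ℝ) →ₗ[ℝ] (ι → ℝ))
    (hcompat : ∀ v : Fin n → ℚ, (fun i => ((g v i : ℚ) : ℝ)) = gR (fun j => ((v j : ℚ) : ℝ)))
    (x : Fin n → ℝ) (hx : gR x = 0) :
    ∃ (d : ℕ) (w : Fin d → (Fin n → ℚ)) (c : Fin d → ℝ),
      (∀ i, g (w i) = 0) ∧ x = ∑ i, c i • (fun j => ((w i j : ℚ) : ℝ)) := by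
  classical
  set Kq := LinearMap.ker g with hKq
  obtain ⟨K', hcompl⟩ := Submodule.exists_isCompl Kq
  set d := Module.finrank ℚ Kq with hd
  set e' := Module.finrank ℚ K' with he'
  let bq : Module.Basis (Fin d) ℚ Kq := Module.finBasis ℚ Kq
  let bu : Module.Basis (Fin e') ℚ K' := Module.finBasis ℚ K'
  let E := Submodule.prodEquivOfIsCompl Kq K' hcompl
  let bb : Module.Basis (Fin d ⊕ Fin e') ℚ (Fin n → ℚ) := (bq.prod bu).map E
  have hbbapp : ∀ j, bb j = ((bq.prod bu) j).1.val + ((bq.prod bu) j).2.val := by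
    intro j
    show E ((bq.prod bu) j) = _
    rfl
  have hbbinl : ∀ i, bb (Sum.inl i) = (bq i).val := by
    intro i
    rw [hbbapp, Module.Basis.prod_apply_inl_fst, Module.Basis.prod_apply_inl_snd]
    simp
  have hbbinr : ∀ i, bb (Sum.inr i) = (bu i).val := by
    intro i
    rw [hbbapp, Module.Basis.prod_apply_inr_fst, Module.Basis.prod_apply_inr_snd]
    simp
  have hkey : ∀ q : Fin e' → ℚ, (∑ i, q i • bb (Sum.inr i)) ∈ Kq → q = 0 := by
    intro q hq
    set u : K' := ∑ i, q i • bu i with hu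
    have hucoe : (u : Fin n → ℚ) = ∑ i, q i • bb (Sum.inr i) := by
      rw [hu]
      push_cast [Submodule.coe_sum]
      exact Finset.sum_congr rfl fun i _ => by rw [hbbinr]
    have humem : (u : Fin n → ℚ) ∈ Kq ⊓ K' := ⟨hucoe ▸ hq, u.2⟩
    rw [hcompl.inf_eq_bot] at humem
    have hu0 : u = 0 := Subtype.ext humem
    have := Fintype.linearIndependent_iff.1 bu.linearIndependent q (by rw [← hu]; exact hu0)
    exact funext this
  -- the real basis
  have hsum : d + e' = n := by
    have h := Submodule.finrank_add_eq_of_isCompl hcompl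
    rw [Module.finrank_pi] at h
    simpa using h
  by_cases hne : Nonempty (Fin d ⊕ Fin e')
  swap
  · -- degenerate: n = 0
    refine ⟨0, Fin.elim0, Fin.elim0, fun i => i.elim0, ?_⟩
    rw [not_nonempty_iff] at hne
    have h0 := Fintype.card_eq_zero_iff.2 hne
    simp only [Fintype.card_sum, Fintype.card_fin] at h0
    have hn0 : n = 0 := by omega
    haveI : IsEmpty (Fin n) := by rw [hn0]; exact Fin.isEmpty'
    funext j
    exact (IsEmpty.false j).elim
  have hindep : LinearIndependent ℝ (fun j => (fun t => ((bb j t : ℚ) : ℝ))) :=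
    indep_cast _ bb.linearIndependent
  have hcard : Fintype.card (Fin d ⊕ Fin e') = Module.finrank ℝ (Fin n → ℝ) := by
    rw [Module.finrank_pi]
    simp only [Fintype.card_sum, Fintype.card_fin]
    simpa using hsum
  let B : Module.Basis (Fin d ⊕ Fin e') ℝ (Fin n → ℝ) :=
    basisOfLinearIndependentOfCardEqFinrank hindep hcard
  have hB : ⇑B = fun j => (fun t => ((bb j t : ℚ) : ℝ)) :=
    coe_basisOfLinearIndependentOfCardEqFinrank hindep hcard
  set c : (Fin d ⊕ Fin e') → ℝ := fun j => B.repr x j with hc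
  have hxsum : x = ∑ j, c j • (fun t => ((bb j t : ℚ) : ℝ)) := by
    conv_lhs => rw [← B.sum_repr x]
    exact Finset.sum_congr rfl fun j _ => by rw [hB]
  have hginl : ∀ i, g (bb (Sum.inl i)) = 0 := by
    intro i
    have : bb (Sum.inl i) ∈ Kq := by rw [hbbinl]; exact (bq i).2
    exact this
  -- apply gR
  have hgr : ∑ i : Fin e', c (Sum.inr i) • (fun t => ((g (bb (Sum.inr i)) t : ℚ) : ℝ)) = 0 := by
    have h1 : gR x = ∑ j, c j • gR (fun t => ((bb j t : ℚ) : ℝ)) := by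
      rw [hxsum, map_sum]
      exact Finset.sum_congr rfl fun j _ => gR.map_smul _ _
    rw [hx] at h1
    have h2 : ∀ j, gR (fun t => ((bb j t : ℚ) : ℝ)) = (fun i => ((g (bb j) i : ℚ) : ℝ)) := by
      intro j; rw [hcompat]
    rw [Fintype.sum_sum_type] at h1
    have h3 : ∀ i : Fin d, c (Sum.inl i) • gR (fun t => ((bb (Sum.inl i) t : ℚ) : ℝ)) = 0 := by
      intro i
      rw [h2, hginl]
      have hz : (fun i : ι => (((0 : ι → ℚ) i : ℚ) : ℝ)) = 0 := by funext t; simp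
      rw [hz, smul_zero]
    rw [Finset.sum_congr rfl (fun i _ => h3 i)] at h1
    simp only [Finset.sum_const_zero, zero_add] at h1
    rw [eq_comm] at h1
    rw [← h1]
    exact Finset.sum_congr rfl fun i _ => by rw [h2]
  have hindep2 : LinearIndependent ℚ (fun i : Fin e' => g (bb (Sum.inr i))) := by
    rw [Fintype.linearIndependent_iff]
    intro q hq
    have : g (∑ i, q i • bb (Sum.inr i)) = 0 := by
      rw [map_sum]
      rw [← hq]
      exact Finset.sum_congr rfl fun i _ => g.map_smul _ _
    have := hkey q this
    exact fun i => congrFun this i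
  have hinr0 : ∀ i : Fin e', c (Sum.inr i) = 0 :=
    Fintype.linearIndependent_iff.1 (indep_cast _ hindep2) _ hgr
  refine ⟨d, fun i => bb (Sum.inl i), fun i => c (Sum.inl i), hginl, ?_⟩
  rw [hxsum, Fintype.sum_sum_type]
  have : ∀ i : Fin e', c (Sum.inr i) • (fun t => ((bb (Sum.inr i) t : ℚ) : ℝ)) = 0 := by
    intro i; rw [hinr0]; simp
  rw [Finset.sum_congr rfl (fun i _ => this i)]
  simp

/-- Theorem `minsize` (optimality part): for `A` of full row rank `m` with
`r = dim(C(A) ∩ (-C(A))) < m`, if the system `(F)` is feasible then no matrix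
`T ∈ ℚ^{k×m}` with `k ≤ r` is a strong aggregation matrix for `(F)`. -/
theorem stmt_13 (m n : ℕ) (A : Matrix (Fin m) (Fin n) ℤ) (b : Fin m → ℤ)
    (hrank : (A.map (Int.cast : ℤ → ℝ)).rank = m)
    (C : Set (Fin m → ℝ))
    (hC : C = {v | ∃ x : Fin n → ℝ, 0 ≤ x ∧ v = (A.map (Int.cast : ℤ → ℝ)).mulVec x})
    (R : Submodule ℝ (Fin m → ℝ))
    (hR : (R : Set (Fin m → ℝ)) = {v | v ∈ C ∧ -v ∈ C})
    (r : ℕ) (hr : r = Module.finrank ℝ R) (hrm : r < m)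
    (hfeas : ∃ x : Fin n → ℤ, 0 ≤ x ∧ A.mulVec x = b) :
    ∀ k : ℕ, k ≤ r → ∀ T : Matrix (Fin k) (Fin m) ℚ,
      {x : Fin n → ℤ | 0 ≤ x ∧ A.mulVec x = b} ≠
        {x : Fin n → ℤ | 0 ≤ x ∧
          (T * A.map (Int.cast : ℤ → ℚ)).mulVec (fun j => (x j : ℚ)) =
            T.mulVec (fun i => (b i : ℚ))} := by
  classical
  intro k hk T hEq
  obtain ⟨xs, hxsnn, hxseq⟩ := hfeas
  set Aℝ : Matrix (Fin m) (Fin n) ℝ := A.map (Int.cast : ℤ → ℝ) with hAR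
  set Aℚ : Matrix (Fin m) (Fin n) ℚ := A.map (Int.cast : ℤ → ℚ) with hAQ
  have hAQR : Aℚ.map (Rat.cast : ℚ → ℝ) = Aℝ := by
    ext i j; simp [hAQ, hAR, Matrix.map_apply]
  set Tℝ : Matrix (Fin k) (Fin m) ℝ := T.map (Rat.cast : ℚ → ℝ) with hTR
  set L : Submodule ℝ (Fin m → ℝ) := LinearMap.ker Tℝ.mulVecLin with hL
  -- rank facts
  have hLrank : Module.finrank ℝ L + Tℝ.rank = m := by
    have h := LinearMap.finrank_range_add_finrank_ker Tℝ.mulVecLin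
    rw [← hL] at h
    rw [Module.finrank_pi] at h
    have hrk : Tℝ.rank = Module.finrank ℝ (LinearMap.range Tℝ.mulVecLin) := rfl
    rw [hrk]
    simp only [Fintype.card_fin] at h
    omega
  have hrankle : Tℝ.rank ≤ k := by
    have := Matrix.rank_le_card_height Tℝ
    simpa using this
  -- Step 1: find v ≠ 0 in C with Tℝ.mulVec v = 0
  have hv : ∃ v : Fin m → ℝ, v ≠ 0 ∧ v ∈ C ∧ Tℝ.mulVec v = 0 := by
    have hCadd : ∀ u w : Fin m → ℝ, u ∈ C → w ∈ C → u + w ∈ C := by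
      intro u w hu hw
      rw [hC] at hu hw ⊢
      obtain ⟨x1, hx1, rfl⟩ := hu
      obtain ⟨x2, hx2, rfl⟩ := hw
      exact ⟨x1 + x2, add_nonneg hx1 hx2, (Matrix.mulVec_add _ _ _).symm⟩
    by_cases hLR : L ⊓ R = ⊥
    · -- L ⊔ R = ⊤ and use a column not in R
      have hfr : Module.finrank ℝ (L ⊔ R : Submodule ℝ (Fin m → ℝ)) =
          Module.finrank ℝ L + Module.finrank ℝ R := by
        have := Submodule.finrank_sup_add_finrank_inf_eq L R
        rw [hLR] at this
        simpa using this
      have hle : Module.finrank ℝ (L ⊔ R : Submodule ℝ (Fin m → ℝ)) ≤ m := by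
        have := Submodule.finrank_le (L ⊔ R : Submodule ℝ (Fin m → ℝ))
        rwa [Module.finrank_pi, Fintype.card_fin] at this
      have htop : L ⊔ R = ⊤ := by
        apply Submodule.eq_top_of_finrank_eq
        rw [Module.finrank_pi, Fintype.card_fin]
        omega
      -- column not in R
      have hcol : ∃ j0 : Fin n, Aℝᵀ j0 ∉ R := by
        by_contra hall
        push_neg at hall
        have hle2 : LinearMap.range Aℝ.mulVecLin ≤ R := by
          rw [Matrix.range_mulVecLin]
          apply Submodule.span_le.2
          rintro _ ⟨j, rfl⟩
          exact hall j
        have := Submodule.finrank_mono hle2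
        have hA : Module.finrank ℝ (LinearMap.range Aℝ.mulVecLin) = m := hrank
        omega
      obtain ⟨j0, hj0⟩ := hcol
      set c : Fin m → ℝ := Aℝ.mulVec (Pi.single j0 1) with hcdef
      have hc_eq : c = Aℝᵀ j0 := by
        funext i
        rw [hcdef, Matrix.mulVec_single]
        simp [Matrix.transpose_apply]
      have hcC : c ∈ C := by
        rw [hC]
        refine ⟨Pi.single j0 1, ?_, rfl⟩
        intro j
        simp only [Pi.single_apply, Pi.zero_apply]
        split <;> norm_num
      have hctop : c ∈ L ⊔ R := htop ▸ Submodule.mem_top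
      obtain ⟨l, hlL, ρ, hρR, hlρ⟩ := Submodule.mem_sup.1 hctop
      refine ⟨l, ?_, ?_, ?_⟩
      · intro h0
        apply hj0
        rw [← hc_eq, ← hlρ, h0, zero_add]
        exact hρR
      · have hρC : -ρ ∈ C := by
          have : ρ ∈ (R : Set (Fin m → ℝ)) := hρR
          rw [hR] at this
          exact this.2
        have : l = c + -ρ := by rw [← hlρ]; ring
        rw [this]
        exact hCadd _ _ hcC hρC
      · have h2 : Tℝ.mulVecLin l = 0 := hlL
        rwa [Matrix.mulVecLin_apply] at h2
    · -- nontrivial intersection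
      obtain ⟨v, hvmem, hv0⟩ := (Submodule.ne_bot_iff _).1 hLR
      refine ⟨v, hv0, ?_, ?_⟩
      · have : v ∈ (R : Set (Fin m → ℝ)) := hvmem.2
        rw [hR] at this
        exact this.1
      · have h2 : Tℝ.mulVecLin v = 0 := hvmem.1
        rwa [Matrix.mulVecLin_apply] at h2
  obtain ⟨v, hv0, hvC, hvT⟩ := hv
  rw [hC] at hvC
  obtain ⟨xb, hxbnn, hxbeq⟩ := hvC
  obtain ⟨i0, hi0'⟩ := Function.ne_iff.1 hv0
  have hi0 : v i0 ≠ 0 := by simpa using hi0'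
  -- stacked linear maps
  set MR : Matrix (Fin k) (Fin n) ℝ := (T * Aℚ).map (Rat.cast : ℚ → ℝ) with hMR
  have hMReq : MR = Tℝ * Aℝ := by
    rw [← hAQR]
    ext i j
    simp only [hMR, hTR, Matrix.map_apply, Matrix.mul_apply]
    push_cast
    ring
  set g : (Fin n → ℚ) →ₗ[ℚ] ((Fin k ⊕ Fin n) → ℚ) :=
    { toFun := fun u => Sum.elim ((T * Aℚ).mulVec u) (fun j => if xb j = 0 then u j else 0)
      map_add' := by
        intro u w
        funext s
        rcases s with s | j
        · simp [Matrix.mulVec_add]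
        · simp only [Sum.elim_inr, Pi.add_apply]
          split <;> simp
      map_smul' := by
        intro a u
        funext s
        rcases s with s | j
        · simp [Matrix.mulVec_smul]
        · simp only [Sum.elim_inr, Pi.smul_apply, RingHom.id_apply]
          split <;> simp } with hg
  set gR : (Fin n → ℝ) →ₗ[ℝ] ((Fin k ⊕ Fin n) → ℝ) :=
    { toFun := fun u => Sum.elim (MR.mulVec u) (fun j => if xb j = 0 then u j else 0)
      map_add' := by
        intro u w
        funext s
        rcases s with s | j
        · simp [Matrix.mulVec_add]
        · simp only [Sum.elim_inr, Pi.add_apply]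
          split <;> simp
      map_smul' := by
        intro a u
        funext s
        rcases s with s | j
        · simp [Matrix.mulVec_smul]
        · simp only [Sum.elim_inr, Pi.smul_apply, RingHom.id_apply]
          split <;> simp } with hgR
  have hcompat : ∀ u : Fin n → ℚ,
      (fun s => ((g u s : ℚ) : ℝ)) = gR (fun j => ((u j : ℚ) : ℝ)) := by
    intro u
    funext s
    rcases s with s | j
    · show (((T * Aℚ).mulVec u s : ℚ) : ℝ) = MR.mulVec (fun j => ((u j : ℚ) : ℝ)) s
      rw [hMR]
      exact RingHom.map_mulVec (Rat.castHom ℝ) (T * Aℚ) u s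
    · show ((if xb j = 0 then u j else 0 : ℚ) : ℝ) = if xb j = 0 then ((u j : ℚ) : ℝ) else 0
      split <;> simp
  have hxbker : gR xb = 0 := by
    funext s
    rcases s with s | j
    · show MR.mulVec xb s = 0
      rw [hMReq, ← Matrix.mulVec_mulVec, ← hxbeq, hvT]
      rfl
    · show (if xb j = 0 then xb j else 0) = 0
      split <;> simp_all
  obtain ⟨d, w, cc, hgw, hxbsum⟩ := ker_span g gR hcompat xb hxbker
  -- topological approximation
  set F : (Fin d → ℝ) → (Fin n → ℝ) := fun a => ∑ i, a i • (fun j => ((w i j : ℚ) : ℝ)) with hF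
  have hFcont : Continuous F := by
    apply continuous_finset_sum
    intro i _
    exact (continuous_apply i).smul continuous_const
  have hFj : ∀ (a : Fin d → ℝ) (j : Fin n), Continuous fun a' => F a' j :=
    fun a j => (continuous_apply j).comp hFcont
  set U : Set (Fin d → ℝ) :=
    ({a | ∀ j, xb j ≠ 0 → 0 < F a j} ∩ {a | Aℝ.mulVec (F a) i0 ≠ 0}) with hU
  have hUopen : IsOpen U := by
    apply IsOpen.inter
    · have : {a : Fin d → ℝ | ∀ j, xb j ≠ 0 → 0 < F a j} =
          ⋂ j, {a | xb j ≠ 0 → 0 < F a j} := by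
        ext a; simp [Set.mem_iInter]
      rw [this]
      apply isOpen_iInter_of_finite
      intro j
      by_cases hj : xb j = 0
      · simp [hj]
      · have : {a : Fin d → ℝ | xb j ≠ 0 → 0 < F a j} = {a | 0 < F a j} := by
          ext a; simp [hj]
        rw [this]
        exact isOpen_lt continuous_const (hFj 0 j)
    · have hcont : Continuous fun a => Aℝ.mulVec (F a) i0 := by
        have : (fun a => Aℝ.mulVec (F a) i0) = fun a => ∑ j, Aℝ i0 j * F a j := by
          funext a; simp [Matrix.mulVec, dotProduct]
        rw [this]
        exact continuous_finset_sum _ fun j _ => continuous_const.mul (hFj 0 j)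
      exact (isOpen_compl_singleton (x := (0:ℝ))).preimage hcont
  have hccU : cc ∈ U := by
    have hFcc : F cc = xb := by rw [hF]; exact hxbsum.symm
    refine ⟨?_, ?_⟩
    · intro j hj
      rw [hFcc]
      rcases lt_or_eq_of_le (hxbnn j) with h | h
      · exact h
      · exact absurd h.symm hj
    · show (Aℝ.mulVec (F cc)) i0 ≠ 0
      rw [hFcc, ← hxbeq]
      exact hi0
  have hdense : Dense (Set.pi Set.univ fun _ : Fin d => Set.range (Rat.cast : ℚ → ℝ)) :=
    dense_pi _ fun i _ => Rat.denseRange_cast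
  obtain ⟨a', ha'mem, ha'U⟩ := hdense.exists_mem_open hUopen ⟨cc, hccU⟩
  have hqex : ∀ i, ∃ qi : ℚ, (qi : ℝ) = a' i := fun i => ha'mem i (Set.mem_univ i)
  choose q hq using hqex
  set x' : Fin n → ℚ := ∑ i, q i • w i with hx'
  have hx'cast : (fun j => ((x' j : ℚ) : ℝ)) = F a' := by
    funext j
    rw [hx', hF]
    simp only [Finset.sum_apply, Pi.smul_apply, smul_eq_mul]
    push_cast
    exact Finset.sum_congr rfl fun i _ => by rw [hq]
  have hgx' : g x' = 0 := by
    rw [hx', map_sum]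
    have : ∀ i ∈ Finset.univ, g (q i • w i) = 0 := by
      intro i _
      rw [g.map_smul, hgw i, smul_zero]
    rw [Finset.sum_congr rfl this]
    simp
  have hTAx' : (T * Aℚ).mulVec x' = 0 := by
    funext s
    have := congrFun hgx' (Sum.inl s)
    simpa [hg] using this
  have hx'zero : ∀ j, xb j = 0 → x' j = 0 := by
    intro j hj
    have := congrFun hgx' (Sum.inr j)
    simpa [hg, hj] using this
  obtain ⟨ha'pos, ha'ne⟩ := ha'U
  have hx'nn : 0 ≤ x' := by
    intro j
    show (0 : ℚ) ≤ x' j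
    by_cases hj : xb j = 0
    · exact (hx'zero j hj).ge
    · have h1 := ha'pos j hj
      rw [← hx'cast] at h1
      have h2 : (0 : ℝ) < ((x' j : ℚ) : ℝ) := h1
      exact_mod_cast le_of_lt h2
  have hAQx' : Aℚ.mulVec x' ≠ 0 := by
    intro h0
    apply ha'ne
    rw [← hx'cast]
    have : ∀ i, Aℝ.mulVec (fun j => ((x' j : ℚ) : ℝ)) i = ((Aℚ.mulVec x' i : ℚ) : ℝ) := by
      intro i
      rw [← hAQR]
      exact (RingHom.map_mulVec (Rat.castHom ℝ) Aℚ x' i).symm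
    rw [this i0, h0]
    simp
  -- clear denominators
  set N : ℕ := ∏ j, (x' j).den with hN
  have hNpos : 0 < N := Finset.prod_pos fun j _ => (x' j).pos
  set y : Fin n → ℤ := fun j => (x' j).num * ((N : ℤ) / ((x' j).den : ℤ)) with hy
  have hycast : ∀ j, ((y j : ℤ) : ℚ) = (N : ℚ) * x' j := by
    intro j
    have hdvd : ((x' j).den : ℤ) ∣ (N : ℤ) := by
      exact_mod_cast Int.natCast_dvd_natCast.2 (Finset.dvd_prod_of_mem _ (Finset.mem_univ j))
    obtain ⟨t, ht⟩ := hdvd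
    have hden0 : ((x' j).den : ℤ) ≠ 0 := by exact_mod_cast (x' j).den_nz
    have hytj : y j = (x' j).num * t := by
      rw [hy]
      simp only
      rw [ht, Int.mul_ediv_cancel_left _ hden0]
    rw [hytj]
    have hNQ : (N : ℚ) = ((x' j).den : ℚ) * (t : ℚ) := by exact_mod_cast congrArg (Int.cast : ℤ → ℚ) ht
    rw [hNQ]
    have hq : ((x' j).num : ℚ) = x' j * ((x' j).den : ℚ) := (Rat.mul_den_eq_num _).symm
    push_cast
    rw [hq]
    ring
  have hynn : 0 ≤ y := by
    intro j
    have : (0 : ℚ) ≤ (y j : ℚ) := by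
      rw [hycast j]
      exact mul_nonneg (by positivity) (hx'nn j)
    exact_mod_cast this
  have hAy : A.mulVec y ≠ 0 := by
    intro h0
    apply hAQx'
    have hcast : ∀ i, ((A.mulVec y i : ℤ) : ℚ) = Aℚ.mulVec (fun j => ((y j : ℤ) : ℚ)) i := by
      intro i
      exact RingHom.map_mulVec (Int.castRingHom ℚ) A y i
    have h1 : Aℚ.mulVec (fun j => ((y j : ℤ) : ℚ)) = 0 := by
      funext i
      rw [← hcast i, h0]
      simp
    have h2 : (fun j => ((y j : ℤ) : ℚ)) = (N : ℚ) • x' := by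
      funext j
      rw [hycast j]
      simp
    rw [h2, Matrix.mulVec_smul] at h1
    have hN0 : (N : ℚ) ≠ 0 := by positivity
    funext i
    have := congrFun h1 i
    simp only [Pi.smul_apply, smul_eq_mul, Pi.zero_apply] at this ⊢
    exact (mul_eq_zero.1 this).resolve_left hN0
  -- final contradiction
  set xh : Fin n → ℤ := xs + y with hxh
  have hxhRHS : xh ∈ {x : Fin n → ℤ | 0 ≤ x ∧
      (T * Aℚ).mulVec (fun j => (x j : ℚ)) = T.mulVec (fun i => (b i : ℚ))} := by
    constructor
    · exact add_nonneg hxsnn hynn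
    · have hsplit : (fun j => ((xh j : ℤ) : ℚ)) =
          (fun j => ((xs j : ℤ) : ℚ)) + (N : ℚ) • x' := by
        funext j
        rw [hxh]
        simp only [Pi.add_apply, Pi.smul_apply, smul_eq_mul]
        push_cast
        rw [hycast j]
      rw [hsplit, Matrix.mulVec_add, Matrix.mulVec_smul, hTAx', smul_zero, add_zero]
      rw [← Matrix.mulVec_mulVec]
      congr 1
      funext i
      rw [← hxseq]
      simp only [hAQ, Matrix.mulVec, dotProduct, Matrix.map_apply]
      push_cast
      rfl

  have hxhLHS : xh ∉ {x : Fin n → ℤ | 0 ≤ x ∧ A.mulVec x = b} := by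
    rintro ⟨-, habs⟩
    apply hAy
    rw [hxh, Matrix.mulVec_add, hxseq] at habs
    funext i
    have := congrFun habs i
    simp only [Pi.add_apply, Pi.zero_apply] at this ⊢
    linarith [this]
  rw [hEq] at hxhLHS
  exact hxhLHS hxhRHS
end

section
/- Let A ∈ ℤ^{m×n}, b ∈ ℤ^m, let R be the lineality space of C(A) and r = dim R. Let B₁,…,B_r ∈ ℤ^m be a basis of the lattice L(A) ∩ R (i.e. every element of L(A) ∩ R is an integer linear combination of B₁,…,B_r and they are linearly independent), and set B_{r+1} = −Σ_{i=1}^{r} B_i. Let A^P be the submatrix of A consisting of the columns of A that do not belong to R. Then for every x ∈ ℤ^n with x ≥ 0 and Ax = b, there exist x^B ∈ ℤ^{r+1} with x^B ≥ 0 and x^P ∈ ℤ^{n₂} with x^P ≥ 0 (n₂ the number of columns of A^P) such that Σ_{i=1}^{r+1} x^B_i·B_i + A^P x^P = b. -/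
/-- Claim 1 in the proof of Theorem `minsize`: with `B₁, …, B_r` a basis of the
lattice `L(A) ∩ R` (`R` the lineality space of `C(A)`, `r = dim R`) and
`B_{r+1} = -∑ B_i`, every nonnegative integer solution of `Ax = b` yields
nonnegative integer vectors `x^B, x^P` with `∑ x^B_i·B_i + A^P x^P = b`, where
`A^P` consists of the columns of `A` not in `R` (encoded by requiring `x^P` to
vanish on the columns of `A` belonging to `R`). -/
theorem stmt_14 (m n r : ℕ) (A : Matrix (Fin m) (Fin n) ℤ) (b : Fin m → ℤ)
    (C : Set (Fin m → ℝ))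
    (hC : C = {v | ∃ x : Fin n → ℝ, 0 ≤ x ∧ v = (A.map (Int.cast : ℤ → ℝ)).mulVec x})
    (Rset : Set (Fin m → ℝ)) (hRset : Rset = {v | v ∈ C ∧ -v ∈ C})
    (hr : r = Module.finrank ℝ (Submodule.span ℝ Rset))
    (Bv : Fin (r + 1) → Fin m → ℤ)
    (hBlast : Bv (Fin.last r) = -(∑ i : Fin r, Bv i.castSucc))
    (hBindep : LinearIndependent ℝ
      (fun (i : Fin r) (j : Fin m) => ((Bv i.castSucc j : ℤ) : ℝ)))
    (hBgen : ∀ v : Fin m → ℤ, (∃ x : Fin n → ℤ, v = A.mulVec x) →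
      (fun j => ((v j : ℤ) : ℝ)) ∈ Rset →
      ∃ c : Fin r → ℤ, v = ∑ i : Fin r, c i • Bv i.castSucc) :
    ∀ x : Fin n → ℤ, 0 ≤ x → A.mulVec x = b →
      ∃ (xB : Fin (r + 1) → ℤ) (xP : Fin n → ℤ), 0 ≤ xB ∧ 0 ≤ xP ∧
        (∀ j : Fin n, (fun i => ((A i j : ℤ) : ℝ)) ∈ Rset → xP j = 0) ∧
        (∑ i : Fin (r + 1), xB i • Bv i) + A.mulVec xP = b := by
  classical
  intro x hx hAx
  -- cone closure facts
  have hC0 : (0 : Fin m → ℝ) ∈ C := by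
    rw [hC]; exact ⟨0, le_refl 0, by simp [Matrix.mulVec_zero]⟩
  have hCadd : ∀ u w : Fin m → ℝ, u ∈ C → w ∈ C → u + w ∈ C := by
    rw [hC]
    rintro u w ⟨xu, hxu, rfl⟩ ⟨xw, hxw, rfl⟩
    exact ⟨xu + xw, add_nonneg hxu hxw, (Matrix.mulVec_add _ _ _).symm⟩
  have hCsmul : ∀ (t : ℝ) (u : Fin m → ℝ), 0 ≤ t → u ∈ C → t • u ∈ C := by
    rw [hC]
    rintro t u ht ⟨xu, hxu, rfl⟩
    exact ⟨t • xu, smul_nonneg ht hxu, (Matrix.mulVec_smul _ _ _).symm⟩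
  -- split x
  set y : Fin n → ℤ := fun j => if (fun i => ((A i j : ℤ) : ℝ)) ∈ Rset then x j else 0 with hy
  set xP : Fin n → ℤ := fun j => if (fun i => ((A i j : ℤ) : ℝ)) ∈ Rset then 0 else x j with hxP
  have hxsplit : x = y + xP := by
    funext j; by_cases h : (fun i => ((A i j : ℤ) : ℝ)) ∈ Rset <;> simp [hy, hxP, h]
  have hynn : ∀ j, 0 ≤ y j := by
    intro j
    by_cases h : (fun i => ((A i j : ℤ) : ℝ)) ∈ Rset
    · simp only [hy, h, if_true]; exact hx j
    · simp [hy, h]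
  set v : Fin m → ℤ := A.mulVec y with hv
  have hcast : ∀ (z : Fin n → ℤ),
      (fun i => ((A.mulVec z i : ℤ) : ℝ)) = (A.map (Int.cast : ℤ → ℝ)).mulVec (fun j => (z j : ℝ)) := by
    intro z; funext i
    simp [Matrix.mulVec, dotProduct, Matrix.map_apply]
  -- cast of v is in Rset
  have hvC : (fun j => ((v j : ℤ) : ℝ)) ∈ C := by
    rw [hC]
    refine ⟨fun j => (y j : ℝ), fun j => by simpa using (Int.cast_nonneg_iff (R := ℝ)).mpr (hynn j), ?_⟩
    exact hcast y
  have hvC' : -(fun j => ((v j : ℤ) : ℝ)) ∈ C := by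
    have heq : -(fun j => ((v j : ℤ) : ℝ)) =
        ∑ j : Fin n, (y j : ℝ) • (-(fun i => ((A i j : ℤ) : ℝ))) := by
      funext i
      simp only [hv, Pi.neg_apply, Finset.sum_apply, Pi.smul_apply, smul_eq_mul]
      simp [Matrix.mulVec, dotProduct]
      exact Finset.sum_congr rfl (fun j _ => mul_comm _ _)
    rw [heq]
    refine Finset.sum_induction _ (· ∈ C) hCadd hC0 ?_
    intro j _
    by_cases h : (fun i => ((A i j : ℤ) : ℝ)) ∈ Rset
    · have hneg : -(fun i => ((A i j : ℤ) : ℝ)) ∈ C := by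
        rw [hRset] at h; exact h.2
      exact hCsmul _ _ (by exact_mod_cast hynn j) hneg
    · simp only [hy, h, if_false]
      simpa using hC0
  have hvR : (fun j => ((v j : ℤ) : ℝ)) ∈ Rset := by
    rw [hRset]; exact ⟨hvC, hvC'⟩
  obtain ⟨c, hc⟩ := hBgen v ⟨y, rfl⟩ hvR
  -- make coefficients nonnegative
  set N : ℤ := ∑ i : Fin r, |c i| with hN
  have hNnn : 0 ≤ N := Finset.sum_nonneg fun i _ => abs_nonneg _
  have hcN : ∀ i : Fin r, 0 ≤ c i + N := by
    intro i
    have : |c i| ≤ N := Finset.single_le_sum (fun j (_ : j ∈ Finset.univ) => abs_nonneg (c j)) (Finset.mem_univ i)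
    linarith [neg_abs_le (c i)]
  set xB : Fin (r + 1) → ℤ := Fin.lastCases N (fun i => c i + N) with hxB
  refine ⟨xB, xP, ?_, ?_, ?_, ?_⟩
  · intro i
    refine Fin.lastCases ?_ ?_ i
    · simpa [hxB] using hNnn
    · intro i; simpa [hxB] using hcN i
  · intro j; by_cases h : (fun i => ((A i j : ℤ) : ℝ)) ∈ Rset <;> simp only [hxP, h, if_true, if_false, ite_true, ite_false] <;> first | exact le_refl 0 | exact hx j
  · intro j h; simp [hxP, h]
  · have hsum : ∑ i : Fin (r + 1), xB i • Bv i = v := by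
      rw [Fin.sum_univ_castSucc]
      simp only [hxB, Fin.lastCases_castSucc, Fin.lastCases_last]
      rw [hBlast, hc, smul_neg, Finset.smul_sum]
      simp only [add_smul]
      rw [Finset.sum_add_distrib]
      abel
    rw [hsum, hv, ← Matrix.mulVec_add, ← hxsplit, hAx]
end

section
/- Let R be an r-dimensional linear subspace of ℝ^m, let B₁,…,B_r be a basis of R, and set B_{r+1} = −Σ_{i=1}^{r} B_i. Let P ∈ ℝ^{m×p} be a matrix such that the cone C(P) = {Py : y ∈ ℝ^p, y ≥ 0} is pointed and C(P) ∩ R = {0}. Then for every l ∈ {1,…,r+1}, the cone generated by the vectors {B_i : 1 ≤ i ≤ r+1, i ≠ l} together with the columns of P is pointed. -/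
lemma snoc_sum_eq {m r : ℕ} (B : Fin r → Fin m → ℝ) (μ : Fin (r+1) → ℝ) :
    (∑ i : Fin (r + 1), μ i • Fin.snoc B (-(∑ i : Fin r, B i)) i) =
      ∑ i : Fin r, (μ i.castSucc - μ (Fin.last r)) • B i := by
  rw [Fin.sum_univ_castSucc]
  simp only [Fin.snoc_castSucc, Fin.snoc_last, smul_neg, Finset.smul_sum, sub_smul]
  rw [Finset.sum_sub_distrib]
  abel

/-- Claim 2 in the proof of Theorem `minsize`: with `B₁, …, B_r` a basis of an
`r`-dimensional subspace `R`, `B_{r+1} = -∑ B_i`, and `P` a matrix whose cone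
`C(P)` is pointed and meets `R` only in `0`, for every `l` the cone generated
by `{B_i : i ≠ l}` together with the columns of `P` is pointed. -/
theorem stmt_15 (m r p : ℕ) (R : Submodule ℝ (Fin m → ℝ))
    (hRdim : Module.finrank ℝ R = r)
    (B : Fin r → Fin m → ℝ) (hBindep : LinearIndependent ℝ B)
    (hBspan : Submodule.span ℝ (Set.range B) = R)
    (P : Matrix (Fin m) (Fin p) ℝ)
    (hPpointed : ∀ v : Fin m → ℝ,
      (∃ y : Fin p → ℝ, 0 ≤ y ∧ v = P.mulVec y) →
      (∃ y : Fin p → ℝ, 0 ≤ y ∧ -v = P.mulVec y) → v = 0)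
    (hPR : ∀ v : Fin m → ℝ, (∃ y : Fin p → ℝ, 0 ≤ y ∧ v = P.mulVec y) →
      v ∈ R → v = 0) :
    ∀ l : Fin (r + 1), ∀ v : Fin m → ℝ,
      (∃ (lam : Fin (r + 1) → ℝ) (y : Fin p → ℝ), 0 ≤ lam ∧ 0 ≤ y ∧ lam l = 0 ∧
        v = (∑ i : Fin (r + 1), lam i • Fin.snoc B (-(∑ i : Fin r, B i)) i) +
          P.mulVec y) →
      (∃ (lam : Fin (r + 1) → ℝ) (y : Fin p → ℝ), 0 ≤ lam ∧ 0 ≤ y ∧ lam l = 0 ∧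
        -v = (∑ i : Fin (r + 1), lam i • Fin.snoc B (-(∑ i : Fin r, B i)) i) +
          P.mulVec y) →
      v = 0 := by
  rintro l v ⟨lam, y, hlam, hy, hlaml, hv⟩ ⟨lam', y', hlam', hy', hlaml', hv'⟩
  set μ : Fin (r+1) → ℝ := lam + lam' with hμ
  have h0 : ((∑ i : Fin (r + 1), lam i • Fin.snoc B (-(∑ i : Fin r, B i)) i) +
        P.mulVec y) + ((∑ i : Fin (r + 1), lam' i • Fin.snoc B (-(∑ i : Fin r, B i)) i) +
        P.mulVec y') = 0 := by
    rw [← hv, ← hv']; simp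
  have hμsplit : (∑ i : Fin (r + 1), μ i • Fin.snoc B (-(∑ i : Fin r, B i)) i) =
      ((∑ i : Fin (r + 1), lam i • Fin.snoc B (-(∑ i : Fin r, B i)) i) +
      (∑ i : Fin (r + 1), lam' i • Fin.snoc B (-(∑ i : Fin r, B i)) i) : Fin m → ℝ) := by
    rw [← Finset.sum_add_distrib]
    refine Finset.sum_congr rfl fun i _ => ?_
    simp [hμ, add_smul]
  have hsum0 : (∑ i : Fin r, (μ i.castSucc - μ (Fin.last r)) • B i) +
      P.mulVec (y + y') = 0 := by
    rw [← snoc_sum_eq B μ, Matrix.mulVec_add, hμsplit]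
    linear_combination h0
  have hBmem : (∑ i : Fin r, (μ i.castSucc - μ (Fin.last r)) • B i) ∈ R := by
    refine Submodule.sum_mem _ fun i _ => Submodule.smul_mem _ _ ?_
    rw [← hBspan]
    exact Submodule.subset_span ⟨i, rfl⟩
  have hP0 : P.mulVec (y + y') = 0 := by
    refine hPR _ ⟨y + y', add_nonneg hy hy', rfl⟩ ?_
    have h : P.mulVec (y + y') =
        -(∑ i : Fin r, (μ i.castSucc - μ (Fin.last r)) • B i) := by
      linear_combination hsum0
    rw [h]
    exact Submodule.neg_mem _ hBmem
  have hB0 : (∑ i : Fin r, (μ i.castSucc - μ (Fin.last r)) • B i) = 0 := by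
    rw [hP0, add_zero] at hsum0; exact hsum0
  have hcoef : ∀ i : Fin r, μ i.castSucc - μ (Fin.last r) = 0 :=
    Fintype.linearIndependent_iff.mp hBindep _ hB0
  have hμl : μ l = 0 := by simp [hμ, hlaml, hlaml']
  have hμ0 : ∀ i, μ i = 0 := by
    have hlast : μ (Fin.last r) = 0 := by
      rcases Fin.eq_castSucc_or_eq_last l with ⟨j, hj⟩ | hj
      · have h := hcoef j
        rw [← hj, hμl] at h
        linarith
      · rwa [hj] at hμl
    intro i
    rcases Fin.eq_castSucc_or_eq_last i with ⟨j, hj⟩ | hj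
    · have h := hcoef j; rw [hlast] at h; rw [hj]; linarith
    · rw [hj]; exact hlast
  have hlam0 : ∀ i, lam i = 0 ∧ lam' i = 0 := by
    intro i
    have h := hμ0 i
    simp only [hμ, Pi.add_apply] at h
    have h1 : (0:ℝ) ≤ lam i := hlam i
    have h2 : (0:ℝ) ≤ lam' i := hlam' i
    constructor <;> linarith
  have hvP : v = P.mulVec y := by
    rw [hv]
    have h : (∑ i : Fin (r + 1), lam i • Fin.snoc B (-(∑ i : Fin r, B i)) i)
        = (0 : Fin m → ℝ) := by
      refine Finset.sum_eq_zero fun i _ => ?_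
      rw [(hlam0 i).1, zero_smul]
    rw [h, zero_add]
  have hvP' : -v = P.mulVec y' := by
    rw [hv']
    have h : (∑ i : Fin (r + 1), lam' i • Fin.snoc B (-(∑ i : Fin r, B i)) i)
        = (0 : Fin m → ℝ) := by
      refine Finset.sum_eq_zero fun i _ => ?_
      rw [(hlam0 i).2, zero_smul]
    rw [h, zero_add]
  exact hPpointed v ⟨y, hy, hvP⟩ ⟨y', hy', hvP'⟩
end

section
/- Let n ≥ 1, let α ∈ ℤ^n with α_j ≥ 1 for all j, and let β be a nonnegative integer. Then the number σ_β of x ∈ ℤ^n with x ≥ 0 and Σ_{j=1}^{n} α_j x_j = β is finite and satisfies (σ_β : ℂ) = (2^{β−1}/π) ∫_{−π}^{π} ( ∏_{j=1}^{n} 2^{α_j} / (2^{α_j} − e^{i·α_j·θ}) ) · e^{−i·β·θ} dθ, where i is the imaginary unit. -/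
lemma geom_pi (n : ℕ) (w : Fin n → ℂ) (hw : ∀ j, ‖w j‖ < 1) :
    Summable (fun x : Fin n → ℕ => ‖∏ j, w j ^ x j‖) ∧
    (∑' x : Fin n → ℕ, ∏ j, w j ^ x j) = ∏ j, (1 - w j)⁻¹ := by
  induction n with
  | zero =>
      haveI : Unique (Fin 0 → ℕ) := ⟨⟨fun i => i.elim0⟩, fun f => funext fun i => i.elim0⟩
      constructor
      · exact .of_finite
      · simp [tsum_eq_single (default : Fin 0 → ℕ) (fun b hb => absurd (Subsingleton.elim b default) hb)]
  | succ n ih =>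
      obtain ⟨ihs, ihe⟩ := ih (fun j => w j.succ) (fun j => hw j.succ)
      set e := (Fin.consEquiv (fun _ : Fin (n+1) => ℕ)).symm with he
      have h0 : Summable (fun k : ℕ => ‖w 0 ^ k‖) := by
        simpa [norm_pow] using summable_geometric_of_lt_one (norm_nonneg _) (hw 0)
      have key : ∀ x : Fin (n+1) → ℕ,
          (∏ j, w j ^ x j) = w 0 ^ (e x).1 * ∏ j : Fin n, w j.succ ^ ((e x).2 j) := by
        intro x
        simp [Fin.prod_univ_succ, he, Fin.consEquiv, Fin.tail]
      have hsum2 : Summable (fun p : ℕ × (Fin n → ℕ) =>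
          ‖w 0 ^ p.1 * ∏ j : Fin n, w j.succ ^ (p.2 j)‖) := by
        simpa [norm_mul] using h0.mul_norm ihs
      constructor
      · have := (Equiv.summable_iff e).2 hsum2
        refine this.congr fun x => ?_
        simp only [Function.comp]
        rw [← key x]
      · calc (∑' x : Fin (n+1) → ℕ, ∏ j, w j ^ x j)
            = ∑' p : ℕ × (Fin n → ℕ), w 0 ^ p.1 * ∏ j : Fin n, w j.succ ^ (p.2 j) := by
              rw [← e.tsum_eq]
              exact tsum_congr fun x => key x
          _ = (∑' k, w 0 ^ k) * ∑' y : Fin n → ℕ, ∏ j : Fin n, w j.succ ^ (y j) :=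
              (tsum_mul_tsum_of_summable_norm h0 ihs).symm
          _ = ∏ j : Fin (n+1), (1 - w j)⁻¹ := by
              rw [tsum_geometric_of_norm_lt_one (hw 0), ihe, Fin.prod_univ_succ]

lemma aux_integral (m : ℤ) :
    (∫ θ in (-Real.pi)..Real.pi, Complex.exp ((Complex.I * m) * θ)) =
      if m = 0 then ((2 * Real.pi : ℝ) : ℂ) else 0 := by
  rcases eq_or_ne m 0 with h | h
  · rw [if_pos h]
    simp only [h, Int.cast_zero, mul_zero, zero_mul, Complex.exp_zero]
    rw [intervalIntegral.integral_const]
    push_cast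
    simp [Complex.real_smul]
    ring
  · rw [if_neg h, integral_exp_mul_complex (by simp [Complex.I_ne_zero, h])]
    have key : Complex.exp (Complex.I * m * (Real.pi : ℂ)) =
        Complex.exp (Complex.I * m * ((-Real.pi : ℝ) : ℂ)) := by
      have h1 : Complex.I * m * (Real.pi : ℂ) = (m : ℤ) * ((Real.pi : ℂ) * Complex.I) := by
        push_cast; ring
      have h2 : Complex.I * m * ((-Real.pi : ℝ) : ℂ) =
          ((-m : ℤ) : ℂ) * ((Real.pi : ℂ) * Complex.I) := by push_cast; ring
      rw [h1, h2, Complex.exp_int_mul, Complex.exp_int_mul, Complex.exp_pi_mul_I]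
      rw [zpow_neg, ← inv_zpow, inv_neg, inv_one]
    rw [key, sub_self, zero_div]


lemma prod_pow_inv {K : Type*} [Field K] (n : ℕ) (a x : Fin n → ℕ) :
    ∏ j, ((2:K)^(a j))^(x j) = (2:K)^(∑ j, a j * x j) := by
  simp_rw [← pow_mul]
  exact Finset.prod_pow_eq_pow_sum _ _ _

lemma norm_exp_I_mul (c θ : ℝ) : ‖Complex.exp (Complex.I * (c:ℂ) * (θ:ℂ))‖ = 1 := by
  have h : Complex.I * (c:ℂ) * (θ:ℂ) = ((c*θ : ℝ):ℂ) * Complex.I := by push_cast; ring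
  rw [h, Complex.norm_exp_ofReal_mul_I]

/-- Proposition `solnumber2`: for `α_j ≥ 1`, the number `σ_β` of `x ∈ ℤⁿ` with
`x ≥ 0` and `∑ α_j x_j = β` is finite and given by
`σ_β = (2^{β-1}/π) ∫_{-π}^{π} (∏_j 2^{α_j}/(2^{α_j} - e^{iα_jθ})) e^{-iβθ} dθ`. -/
theorem stmt_18 (n : ℕ) (hn : 1 ≤ n) (α : Fin n → ℤ) (hα : ∀ j, 1 ≤ α j) (β : ℕ) :
    {x : Fin n → ℤ | 0 ≤ x ∧ ∑ j, α j * x j = (β : ℤ)}.Finite ∧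
    ((Set.ncard {x : Fin n → ℤ | 0 ≤ x ∧ ∑ j, α j * x j = (β : ℤ)} : ℕ) : ℂ) =
      ((2 : ℂ) ^ ((β : ℤ) - 1) / (Real.pi : ℂ)) *
        ∫ θ in (-Real.pi)..Real.pi,
          (∏ j : Fin n,
            (2 : ℂ) ^ (α j) /
              ((2 : ℂ) ^ (α j) - Complex.exp (Complex.I * (α j : ℂ) * (θ : ℂ)))) *
            Complex.exp (-Complex.I * (β : ℂ) * (θ : ℂ)) := by
  -- natural versions of exponents
  set a : Fin n → ℕ := fun j => (α j).toNat with ha_def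
  have ha_cast : ∀ j, ((a j : ℤ)) = α j := fun j =>
    Int.toNat_of_nonneg (by linarith [hα j])
  have ha_pos : ∀ j, 1 ≤ a j := by
    intro j; have h1 := hα j; have h2 := ha_cast j; omega
  -- weight function
  set S : (Fin n → ℕ) → ℕ := fun x => ∑ j, a j * x j with hS_def
  set T : Set (Fin n → ℕ) := {x | S x = β} with hT_def
  -- T is finite
  have hT : T.Finite := by
    apply Set.Finite.subset (Set.Finite.pi (fun j : Fin n => Set.finite_Iic β))
    intro x hx
    simp only [Set.mem_pi, Set.mem_univ, Set.mem_Iic, forall_true_left]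
    intro j
    have h1 : a j * x j ≤ S x := Finset.single_le_sum (f := fun j => a j * x j)
      (fun i _ => Nat.zero_le _) (Finset.mem_univ j)
    have h2 : x j ≤ a j * x j := Nat.le_mul_of_pos_left _ (ha_pos j)
    have hxβ : S x = β := hx
    omega
  -- the ℤ-set is the image of T
  set φ : (Fin n → ℕ) → (Fin n → ℤ) := fun y j => (y j : ℤ) with hφ_def
  have hφ_inj : Function.Injective φ := by
    intro y z h
    funext j
    have := congrFun h j
    simp only [hφ_def] at this
    exact_mod_cast this
  have himg : {x : Fin n → ℤ | 0 ≤ x ∧ ∑ j, α j * x j = (β : ℤ)} = φ '' T := by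
    ext x
    constructor
    · rintro ⟨hx0, hxs⟩
      refine ⟨fun j => (x j).toNat, ?_, ?_⟩
      · show S _ = β
        have : ((S (fun j => (x j).toNat) : ℤ)) = (β : ℤ) := by
          rw [hS_def]
          push_cast
          rw [← hxs]
          apply Finset.sum_congr rfl
          intro j _
          rw [ha_cast j, Int.toNat_of_nonneg (hx0 j)]
        exact_mod_cast this
      · funext j
        simp [hφ_def, Int.toNat_of_nonneg (hx0 j)]
    · rintro ⟨y, hy, rfl⟩
      refine ⟨fun j => Int.natCast_nonneg _, ?_⟩
      have : S y = β := hy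
      calc ∑ j, α j * ((y j : ℤ)) = ((∑ j, a j * y j : ℕ) : ℤ) := by
            push_cast
            exact Finset.sum_congr rfl fun j _ => by rw [ha_cast j]
        _ = (β : ℤ) := by exact_mod_cast this
  have hfin : {x : Fin n → ℤ | 0 ≤ x ∧ ∑ j, α j * x j = (β : ℤ)}.Finite := by
    rw [himg]; exact hT.image φ
  refine ⟨hfin, ?_⟩
  have hcard : {x : Fin n → ℤ | 0 ≤ x ∧ ∑ j, α j * x j = (β : ℤ)}.ncard = hT.toFinset.card := by
    rw [himg, Set.ncard_image_of_injective _ hφ_inj, Set.ncard_eq_toFinset_card _ hT]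
  rw [hcard]
  have hπpos := Real.pi_pos
  have hπle : (-Real.pi) ≤ Real.pi := by linarith
  set w : ℝ → Fin n → ℂ := fun θ j => Complex.exp (Complex.I * ((α j : ℂ)) * (θ:ℂ)) / (2:ℂ)^(a j)
    with hw_def
  have hpow_cast : ∀ j, (2:ℂ)^(α j) = (2:ℂ)^(a j) := fun j => by
    rw [← ha_cast j, zpow_natCast]
  have hw_norm : ∀ θ j, ‖w θ j‖ = ((2:ℝ)^(a j))⁻¹ := by
    intro θ j
    rw [hw_def]
    simp only
    rw [norm_div]
    have hc : ((α j : ℂ)) = (((α j : ℝ)) : ℂ) := by push_cast; ring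
    rw [hc, norm_exp_I_mul, norm_pow]
    norm_num
  have hw_lt : ∀ θ j, ‖w θ j‖ < 1 := by
    intro θ j
    rw [hw_norm]
    rw [inv_lt_one_iff₀]
    right
    exact one_lt_pow₀ (by norm_num) (Nat.one_le_iff_ne_zero.mp (ha_pos j))
  have hfactor : ∀ (θ : ℝ) (j : Fin n),
      (2:ℂ)^(α j) / ((2:ℂ)^(α j) - Complex.exp (Complex.I * ((α j : ℂ)) * (θ:ℂ)))
        = (1 - w θ j)⁻¹ := by
    intro θ j
    have hp : ((2:ℂ)^(a j)) ≠ 0 := pow_ne_zero _ two_ne_zero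
    rw [hpow_cast j, hw_def]
    simp only
    rw [one_sub_div hp, inv_div]
  set F : (Fin n → ℕ) → ℝ → ℂ := fun x θ =>
      ((2:ℂ)^(S x))⁻¹ *
        Complex.exp (Complex.I * ((((S x : ℤ) - (β:ℤ)) : ℤ) : ℂ) * (θ:ℂ)) with hF_def
  have hprod : ∀ (θ : ℝ) (x : Fin n → ℕ),
      (∏ j, (w θ j)^(x j))
        = ((2:ℂ)^(S x))⁻¹ * Complex.exp (Complex.I * ((S x : ℂ)) * (θ:ℂ)) := by
    intro θ x
    rw [hw_def]
    simp only [div_eq_mul_inv, mul_pow, ← inv_pow]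
    rw [Finset.prod_mul_distrib]
    simp_rw [inv_pow]
    rw [Finset.prod_inv_distrib, prod_pow_inv, mul_comm]
    congr 1
    simp_rw [← Complex.exp_nat_mul]
    rw [← Complex.exp_sum]
    congr 1
    have hcast : ((S x : ℕ) : ℂ) = ∑ j, ((a j : ℂ)) * ((x j : ℂ)) := by
      rw [hS_def]; push_cast; rfl
    rw [hcast, Finset.mul_sum, Finset.sum_mul]
    refine Finset.sum_congr rfl fun j _ => ?_
    have : ((a j : ℕ) : ℂ) = ((α j : ℤ) : ℂ) := by rw [← ha_cast j]; push_cast; ring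
    rw [this]
    ring
  have hpt : ∀ θ : ℝ,
      (∏ j, (2:ℂ)^(α j) / ((2:ℂ)^(α j) - Complex.exp (Complex.I * ((α j : ℂ)) * (θ:ℂ)))) *
        Complex.exp (-Complex.I * (β:ℂ) * (θ:ℂ))
      = ∑' x : Fin n → ℕ, F x θ := by
    intro θ
    rw [Finset.prod_congr rfl (fun j _ => hfactor θ j), ← (geom_pi n (w θ) (hw_lt θ)).2,
      ← tsum_mul_right]
    apply tsum_congr
    intro x
    rw [hprod θ x, hF_def]
    simp only
    rw [mul_assoc, mul_assoc, ← Complex.exp_add]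
    congr 2
    push_cast
    ring
  have hFnorm : ∀ x θ, ‖F x θ‖ = ((2:ℝ)^(S x))⁻¹ := by
    intro x θ
    rw [hF_def]
    simp only [norm_mul, norm_inv, norm_pow]
    have hc : (((((S x : ℤ) - (β:ℤ)) : ℤ)) : ℂ) = ((((S x : ℤ) - (β:ℤ) : ℤ) : ℝ) : ℂ) := by
      push_cast; ring
    rw [hc, norm_exp_I_mul]
    norm_num
  have hsummable : Summable (fun x : Fin n → ℕ => ((2:ℝ)^(S x))⁻¹) := by
    refine ((geom_pi n (w 0) (hw_lt 0)).1).congr fun x => ?_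
    rw [norm_prod]
    simp_rw [norm_pow, hw_norm, inv_pow]
    rw [Finset.prod_inv_distrib, prod_pow_inv]
  have hFcont : ∀ x, Continuous (F x) := by
    intro x
    rw [hF_def]
    exact continuous_const.mul (Complex.continuous_exp.comp
      (continuous_const.mul Complex.continuous_ofReal))
  have hFint : ∀ x, MeasureTheory.IntegrableOn (F x) (Set.Ioc (-Real.pi) Real.pi) :=
    fun x => (hFcont x).integrableOn_Ioc
  have hnormint : ∀ x, (∫ θ in Set.Ioc (-Real.pi) Real.pi, ‖F x θ‖) =
      ((2:ℝ)^(S x))⁻¹ * (2 * Real.pi) := by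
    intro x
    simp_rw [hFnorm]
    rw [MeasureTheory.setIntegral_const, Real.volume_real_Ioc_of_le (by linarith),
      smul_eq_mul]
    ring
  have hswap : (∫ θ in (-Real.pi)..Real.pi, ∑' x : Fin n → ℕ, F x θ)
      = ∑' x : Fin n → ℕ, ∫ θ in (-Real.pi)..Real.pi, F x θ := by
    rw [intervalIntegral.integral_of_le hπle]
    rw [← MeasureTheory.integral_tsum_of_summable_integral_norm hFint]
    · exact tsum_congr fun x => (intervalIntegral.integral_of_le hπle).symm
    · refine (hsummable.mul_right (2 * Real.pi)).congr fun x => (hnormint x).symm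
  have hFval : ∀ x, (∫ θ in (-Real.pi)..Real.pi, F x θ)
      = if S x = β then ((2:ℂ)^β)⁻¹ * ((2 * Real.pi : ℝ) : ℂ) else 0 := by
    intro x
    rw [hF_def]
    simp only
    rw [intervalIntegral.integral_const_mul]
    rw [aux_integral ((S x : ℤ) - (β:ℤ))]
    rcases eq_or_ne (S x) β with h | h
    · rw [if_pos (by rw [h, sub_self]), if_pos h, h]
    · rw [if_neg (sub_ne_zero.mpr (by exact_mod_cast h)), if_neg h, mul_zero]
  rw [intervalIntegral.integral_congr (fun θ _ => hpt θ), hswap]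
  rw [tsum_congr hFval]
  rw [tsum_eq_sum (s := hT.toFinset)
      (fun b hb => if_neg (by simpa [hT_def] using hb))]
  rw [Finset.sum_congr rfl (fun x hx => if_pos (by simpa [hT_def] using hx)),
    Finset.sum_const, nsmul_eq_mul]
  have h2β : ((2:ℂ)^β) ≠ 0 := pow_ne_zero _ two_ne_zero
  have hπC : ((Real.pi : ℂ)) ≠ 0 := Complex.ofReal_ne_zero.2 Real.pi_ne_zero
  have hzpow : (2:ℂ) ^ ((β:ℤ) - 1) = (2:ℂ)^β / 2 := by
    rw [zpow_sub₀ (two_ne_zero), zpow_one, zpow_natCast]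
  rw [hzpow]
  push_cast
  field_simp
end
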